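/- arXiv:1004.0977 — 4 statements merged into one kernel-verified Lean document; each statement's English description precedes it below -/
import Mathlib

section
/- Let τ be any Borel probability measure on L = {1,...,K}^ℕ (with 2 ≤ K < ∞). For x ∈ L and n ≥ 1 define f_n(x) = −(1/n) log τ(C_{x|_n}), where x|_n is the initial segment of x of length n and C_{x|_n} ⊂ L is the cylinder set of sequences starting with x|_n. Then the function f̄ := sup_{n≥1} f_n is integrable with respect to τ, i.e. ∫_L f̄ dτ < ∞. -/
open MeasureTheory Filter Set
open scoped Classical ENNReal

section Aux

variable {K : ℕ}

private def cylSet {m : ℕ} (w : Fin m → Fin K) : Set (ℕ → Fin K) :=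
  {y | ∀ i : Fin m, y i = w i}

private lemma measurable_cylMeas (τ : Measure (ℕ → Fin K)) (n : ℕ) :
    Measurable (fun x : ℕ → Fin K =>
      τ {y : ℕ → Fin K | ∀ i : Fin (n + 1), y i = x i}) := by
  have h : (fun x : ℕ → Fin K => τ {y : ℕ → Fin K | ∀ i : Fin (n + 1), y i = x i})
      = (fun w : Fin (n + 1) → Fin K => τ (cylSet w))
        ∘ (fun x (i : Fin (n + 1)) => x (i : ℕ)) := rfl
  rw [h]
  exact Measurable.of_discrete.comp
    (measurable_pi_lambda _ fun i => measurable_pi_apply (i : ℕ))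

/-- The function `f_n`. -/
private noncomputable def fEnt (τ : Measure (ℕ → Fin K)) (n : ℕ) (x : ℕ → Fin K) : ℝ≥0∞ :=
  if τ {y : ℕ → Fin K | ∀ i : Fin (n + 1), y i = x i} = 0 then (⊤ : ℝ≥0∞)
  else ENNReal.ofReal (-(1 / ((n : ℝ) + 1)) *
    Real.log (τ {y : ℕ → Fin K | ∀ i : Fin (n + 1), y i = x i}).toReal)

private lemma measurable_fEnt (τ : Measure (ℕ → Fin K)) (n : ℕ) :
    Measurable (fEnt τ n) := by
  have h : fEnt τ n = (fun c : ℝ≥0∞ =>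
      if c = 0 then (⊤ : ℝ≥0∞)
      else ENNReal.ofReal (-(1 / ((n : ℝ) + 1)) * Real.log c.toReal))
      ∘ (fun x => τ {y : ℕ → Fin K | ∀ i : Fin (n + 1), y i = x i}) := rfl
  rw [h]
  refine Measurable.comp ?_ (measurable_cylMeas τ n)
  refine Measurable.ite (measurableSet_eq) measurable_const ?_
  exact ENNReal.measurable_ofReal.comp
    (measurable_const.mul (Real.measurable_log.comp ENNReal.measurable_toReal))

/-- Union bound on the measure of points whose cylinder is small. -/
private lemma meas_cyl_lt (τ : Measure (ℕ → Fin K)) (m : ℕ) (ε : ℝ≥0∞) :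
    τ {x : ℕ → Fin K | τ (cylSet (fun i : Fin m => x i)) < ε}
      ≤ (K : ℝ≥0∞) ^ m * ε := by
  have hsub : {x : ℕ → Fin K | τ (cylSet (fun i : Fin m => x i)) < ε} ⊆
      ⋃ w : Fin m → Fin K, ⋃ (_ : τ (cylSet w) < ε), cylSet w := by
    intro x hx
    exact mem_iUnion.2 ⟨fun i => x i, mem_iUnion.2 ⟨hx, fun i => rfl⟩⟩
  calc τ {x : ℕ → Fin K | τ (cylSet (fun i : Fin m => x i)) < ε}
      ≤ τ (⋃ w : Fin m → Fin K, ⋃ (_ : τ (cylSet w) < ε), cylSet w) := measure_mono hsub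
    _ ≤ ∑' w : Fin m → Fin K, τ (⋃ (_ : τ (cylSet w) < ε), cylSet w) := measure_iUnion_le _
    _ ≤ ∑' _w : Fin m → Fin K, ε := by
        refine ENNReal.tsum_le_tsum fun w => ?_
        by_cases h : τ (cylSet w) < ε
        · simpa [h] using h.le
        · simp [h]
    _ = (Fintype.card (Fin m → Fin K) : ℝ≥0∞) * ε := by
        rw [tsum_fintype]
        simp [Finset.sum_const, nsmul_eq_mul]
    _ = (K : ℝ≥0∞) ^ m * ε := by
        congr 1
        rw [Fintype.card_fun]
        push_cast
        simp

private lemma gt_subset (τ : Measure (ℕ → Fin K)) [IsProbabilityMeasure τ]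
    (n : ℕ) {t : ℝ} (ht : 0 ≤ t) :
    {x : ℕ → Fin K | ENNReal.ofReal t < fEnt τ n x} ⊆
      {x : ℕ → Fin K | τ (cylSet (fun i : Fin (n + 1) => x i))
        < ENNReal.ofReal (Real.exp (-(((n : ℝ) + 1) * t)))} := by
  intro x hx
  simp only [mem_setOf_eq] at hx ⊢
  have hc : τ (cylSet (fun i : Fin (n + 1) => x i))
      = τ {y : ℕ → Fin K | ∀ i : Fin (n + 1), y i = x i} := rfl
  rw [hc]
  set c := τ {y : ℕ → Fin K | ∀ i : Fin (n + 1), y i = x i} with hcdef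
  by_cases h0 : c = 0
  · rw [h0]
    exact ENNReal.ofReal_pos.2 (Real.exp_pos _)
  · rw [fEnt, if_neg h0] at hx
    set s := -(1 / ((n : ℝ) + 1)) * Real.log c.toReal with hs
    have hspos : 0 < s := by
      by_contra hcon
      push_neg at hcon
      rw [ENNReal.ofReal_eq_zero.2 hcon] at hx
      exact (not_lt.2 zero_le) hx
    have hts : t < s := (ENNReal.ofReal_lt_ofReal_iff hspos).1 hx
    have hn1 : (0:ℝ) < (n : ℝ) + 1 := by positivity
    have hlog : Real.log c.toReal < -(((n : ℝ) + 1) * t) := by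
      have h' := mul_lt_mul_of_pos_left hts hn1
      have hne : ((n:ℝ) + 1) ≠ 0 := ne_of_gt hn1
      have hid : ((n:ℝ) + 1) * (-(1 / ((n:ℝ) + 1)) * Real.log c.toReal)
          = -Real.log c.toReal := by field_simp
      rw [hid] at h'
      linarith
    have hcpos : 0 < c.toReal := ENNReal.toReal_pos h0 (measure_ne_top τ _)
    have hclt : c.toReal < Real.exp (-(((n : ℝ) + 1) * t)) := by
      calc c.toReal = Real.exp (Real.log c.toReal) := (Real.exp_log hcpos).symm
        _ < Real.exp (-(((n : ℝ) + 1) * t)) := Real.exp_lt_exp.2 hlog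
    calc c = ENNReal.ofReal c.toReal := (ENNReal.ofReal_toReal (measure_ne_top τ _)).symm
      _ < ENNReal.ofReal (Real.exp (-(((n : ℝ) + 1) * t))) :=
        (ENNReal.ofReal_lt_ofReal_iff (Real.exp_pos _)).2 hclt

private lemma meas_fEnt_gt (τ : Measure (ℕ → Fin K)) [IsProbabilityMeasure τ]
    (n : ℕ) {t : ℝ} (ht : 0 ≤ t) :
    τ {x : ℕ → Fin K | ENNReal.ofReal t < fEnt τ n x}
      ≤ ENNReal.ofReal (((K : ℝ) * Real.exp (-t)) ^ (n + 1)) := by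
  refine (measure_mono (gt_subset τ n ht)).trans ?_
  refine (meas_cyl_lt τ (n + 1) _).trans_eq ?_
  have h1 : ((K : ℝ≥0∞)) ^ (n + 1) = ENNReal.ofReal ((K : ℝ) ^ (n + 1)) := by
    rw [ENNReal.ofReal_pow (by positivity), ENNReal.ofReal_natCast]
  rw [h1, ← ENNReal.ofReal_mul (by positivity)]
  congr 1
  have h2 : Real.exp (-(((n : ℝ) + 1) * t)) = Real.exp (-t) ^ (n + 1) := by
    rw [← Real.exp_nat_mul]
    congr 1
    push_cast
    ring
  rw [h2, mul_pow]

private lemma meas_sup_gt (τ : Measure (ℕ → Fin K)) [IsProbabilityMeasure τ]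
    {t : ℝ} (ht : 0 ≤ t) :
    τ {x : ℕ → Fin K | ENNReal.ofReal t < ⨆ n : ℕ, fEnt τ n x}
      ≤ ∑' n : ℕ, ENNReal.ofReal (((K : ℝ) * Real.exp (-t)) ^ (n + 1)) := by
  have hsub : {x : ℕ → Fin K | ENNReal.ofReal t < ⨆ n : ℕ, fEnt τ n x} ⊆
      ⋃ n : ℕ, {x : ℕ → Fin K | ENNReal.ofReal t < fEnt τ n x} := by
    intro x hx
    simp only [mem_setOf_eq] at hx
    obtain ⟨n, hn⟩ := lt_iSup_iff.1 hx
    exact mem_iUnion.2 ⟨n, hn⟩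
  exact (measure_mono hsub).trans ((measure_iUnion_le _).trans
    (ENNReal.tsum_le_tsum fun n => meas_fEnt_gt τ n ht))

private lemma tsum_pow_le {a : ℝ} (h0 : 0 ≤ a) (h : a ≤ 1 / 2) :
    ∑' n : ℕ, ENNReal.ofReal (a ^ (n + 1)) ≤ ENNReal.ofReal (2 * a) := by
  have ha1 : a < 1 := by linarith
  have hfun : (fun n : ℕ => a ^ (n + 1)) = fun n : ℕ => a * a ^ n := by
    funext n; ring
  have hs : Summable (fun n : ℕ => a ^ (n + 1)) := by
    rw [hfun]
    exact (summable_geometric_of_lt_one h0 ha1).mul_left a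
  rw [← ENNReal.ofReal_tsum_of_nonneg (fun n => pow_nonneg h0 _) hs]
  apply ENNReal.ofReal_le_ofReal
  have htsum : ∑' n : ℕ, a ^ (n + 1) = a * (1 - a)⁻¹ := by
    rw [hfun, tsum_mul_left, tsum_geometric_of_lt_one h0 ha1]
  rw [htsum]
  have hinv : (1 - a)⁻¹ ≤ 2 := by
    rw [inv_le_comm₀ (by linarith) (by norm_num)]
    linarith
  calc a * (1 - a)⁻¹ ≤ a * 2 := mul_le_mul_of_nonneg_left hinv h0
    _ = 2 * a := by ring

private lemma ofReal_nat_add_one (j : ℕ) :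
    ENNReal.ofReal ((j : ℝ) + 1) = (j : ℝ≥0∞) + 1 := by
  rw [ENNReal.ofReal_add (by positivity) zero_le_one, ENNReal.ofReal_natCast,
    ENNReal.ofReal_one]

private lemma le_one_add_tsum_indicator (a : ℝ≥0∞) :
    a ≤ 1 + ∑' j : ℕ, (if ((j : ℝ≥0∞) + 1 < a) then (1 : ℝ≥0∞) else 0) := by
  rcases eq_or_ne a ⊤ with rfl | ha
  · have h : ∀ j : ℕ, (if ((j : ℝ≥0∞) + 1 < (⊤:ℝ≥0∞)) then (1:ℝ≥0∞) else 0) = 1 := by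
      intro j
      rw [if_pos]
      exact ENNReal.add_lt_top.2 ⟨ENNReal.natCast_lt_top j, ENNReal.one_lt_top⟩
    rw [tsum_congr h, ENNReal.tsum_const_eq_top_of_ne_zero one_ne_zero]
    simp
  · by_cases h1 : a ≤ 1
    · exact h1.trans le_self_add
    push_neg at h1
    set r := a.toReal with hr
    have hr1 : 1 < r := by
      have := (ENNReal.toReal_lt_toReal ENNReal.one_ne_top ha).2 h1
      simpa using this
    set m := ⌈r⌉₊ - 1 with hm
    have hceil : 1 ≤ ⌈r⌉₊ := by
      rw [Nat.one_le_ceil_iff]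
      linarith
    have hm1 : m + 1 = ⌈r⌉₊ := by omega
    have hmr : (m : ℝ) < r := by
      by_contra hcon
      push_neg at hcon
      have : ⌈r⌉₊ ≤ m := Nat.ceil_le.2 hcon
      omega
    have hrm : r ≤ (m : ℝ) + 1 := by
      have h' := Nat.le_ceil r
      rw [← hm1] at h'
      push_cast at h'
      linarith
    have hsum : (m : ℝ≥0∞) ≤ ∑' j : ℕ, (if ((j:ℝ≥0∞)+1 < a) then (1:ℝ≥0∞) else 0) := by
      have hle := Summable.sum_le_tsum
        (f := fun j : ℕ => (if ((j:ℝ≥0∞)+1 < a) then (1:ℝ≥0∞) else 0))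
        (Finset.range m) (fun j _ => zero_le) ENNReal.summable
      refine le_trans ?_ hle
      have heq : ∀ j ∈ Finset.range m,
          (if ((j:ℝ≥0∞)+1 < a) then (1:ℝ≥0∞) else 0) = 1 := by
        intro j hj
        rw [if_pos]
        have hjm : j < m := Finset.mem_range.1 hj
        have hj' : (j:ℝ) + 1 ≤ (m : ℝ) := by exact_mod_cast Nat.succ_le_of_lt hjm
        calc ((j:ℝ≥0∞)+1) = ENNReal.ofReal ((j:ℝ)+1) := (ofReal_nat_add_one j).symm
          _ < ENNReal.ofReal r := (ENNReal.ofReal_lt_ofReal_iff (by linarith)).2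
              (by linarith)
          _ = a := ENNReal.ofReal_toReal ha
      rw [Finset.sum_congr rfl heq, Finset.sum_const, nsmul_eq_mul, mul_one]
      simp
    calc a = ENNReal.ofReal r := (ENNReal.ofReal_toReal ha).symm
      _ ≤ ENNReal.ofReal ((m:ℝ)+1) := ENNReal.ofReal_le_ofReal hrm
      _ = (m : ℝ≥0∞) + 1 := ofReal_nat_add_one m
      _ = 1 + (m : ℝ≥0∞) := add_comm _ _
      _ ≤ 1 + ∑' j : ℕ, (if ((j:ℝ≥0∞)+1 < a) then (1:ℝ≥0∞) else 0) :=
          add_le_add_right hsum 1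

end Aux

/-- For any Borel probability measure `τ` on `L = {1,…,K}^ℕ` (with
`2 ≤ K < ∞`), setting `f_n(x) = −(1/n) log τ(C_{x|_n})` (valued in `[0,∞]`, equal to
`+∞` when the cylinder is null), the function `f̄ = sup_{n ≥ 1} f_n` is integrable with
respect to `τ`, i.e. `∫ f̄ dτ < ∞`. -/
theorem sup_entropy_integrable
    (K : ℕ) (hK : 2 ≤ K)
    (τ : Measure (ℕ → Fin K)) [IsProbabilityMeasure τ] :
    ∫⁻ x, (⨆ n : ℕ,
        if τ {y : ℕ → Fin K | ∀ i : Fin (n + 1), y i = x i} = 0 then (⊤ : ℝ≥0∞)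
        else ENNReal.ofReal (-(1 / ((n : ℝ) + 1)) *
          Real.log (τ {y : ℕ → Fin K | ∀ i : Fin (n + 1), y i = x i}).toReal)) ∂τ
      < ⊤ := by
  have hKpos : (0:ℝ) < K := by positivity
  set F : (ℕ → Fin K) → ℝ≥0∞ := fun x => ⨆ n : ℕ, fEnt τ n x with hF
  have hint : (∫⁻ x, (⨆ n : ℕ,
        if τ {y : ℕ → Fin K | ∀ i : Fin (n + 1), y i = x i} = 0 then (⊤ : ℝ≥0∞)
        else ENNReal.ofReal (-(1 / ((n : ℝ) + 1)) *
          Real.log (τ {y : ℕ → Fin K | ∀ i : Fin (n + 1), y i = x i}).toReal)) ∂τ)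
      = ∫⁻ x, F x ∂τ := rfl
  rw [hint]
  have hmF : Measurable F := Measurable.iSup (fun n => measurable_fEnt τ n)
  have hmes : ∀ j : ℕ, MeasurableSet {x : ℕ → Fin K | (j : ℝ≥0∞) + 1 < F x} :=
    fun j => measurableSet_lt measurable_const hmF
  -- Step 1 : layer-cake type bound
  have key : ∫⁻ x, F x ∂τ ≤ 1 + ∑' j : ℕ, τ {x : ℕ → Fin K | (j : ℝ≥0∞) + 1 < F x} := by
    have hb : ∫⁻ x, F x ∂τ ≤
        ∫⁻ x, (1 + ∑' j : ℕ, Set.indicator {x : ℕ → Fin K | (j : ℝ≥0∞) + 1 < F x}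
          (1 : (ℕ → Fin K) → ℝ≥0∞) x) ∂τ := by
      refine lintegral_mono fun x => ?_
      have h := le_one_add_tsum_indicator (F x)
      refine h.trans (le_of_eq ?_)
      congr 1
      refine tsum_congr fun j => ?_
      rw [Set.indicator_apply]
      simp [Set.mem_setOf_eq, Pi.one_apply]
    refine hb.trans (le_of_eq ?_)
    rw [lintegral_add_left measurable_const]
    congr 1
    · simp
    · rw [lintegral_tsum (fun j => ((measurable_one.indicator (hmes j)).aemeasurable))]
      exact tsum_congr fun j => lintegral_indicator_one (hmes j)
  -- Step 2 : bound each tail measure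
  set N : ℕ := 2 * K with hN
  have hexpN : 2 * (K:ℝ) ≤ Real.exp ((N : ℝ) + 1) := by
    have h := Real.add_one_le_exp ((N : ℝ) + 1)
    have : ((N:ℝ)) = 2 * K := by rw [hN]; push_cast; ring
    linarith
  have hbound : ∀ j : ℕ, τ {x : ℕ → Fin K | (j : ℝ≥0∞) + 1 < F x}
      ≤ ENNReal.ofReal (Real.exp ((N : ℝ) - j)) := by
    intro j
    by_cases hj : j < N
    · have h1 : τ {x : ℕ → Fin K | (j : ℝ≥0∞) + 1 < F x} ≤ 1 := prob_le_one
      refine h1.trans ?_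
      rw [ENNReal.one_le_ofReal]
      apply Real.one_le_exp
      have hjN : (j:ℝ) ≤ (N:ℝ) := by exact_mod_cast hj.le
      linarith
    · push_neg at hj
      have hjN : (N:ℝ) ≤ (j:ℝ) := by exact_mod_cast hj
      have hexpj : 2 * (K:ℝ) ≤ Real.exp ((j:ℝ) + 1) := by
        refine hexpN.trans (Real.exp_le_exp.2 ?_)
        linarith
      have hset : {x : ℕ → Fin K | (j : ℝ≥0∞) + 1 < F x}
          = {x : ℕ → Fin K | ENNReal.ofReal ((j:ℝ)+1) < F x} := by
        ext x
        rw [Set.mem_setOf_eq, Set.mem_setOf_eq, ofReal_nat_add_one j]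
      have ht : (0:ℝ) ≤ (j:ℝ) + 1 := by positivity
      set a : ℝ := (K : ℝ) * Real.exp (-((j:ℝ)+1)) with ha
      have ha0 : 0 ≤ a := by positivity
      have haeq : a = (K:ℝ) / Real.exp ((j:ℝ)+1) := by
        rw [ha, Real.exp_neg]; ring
      have hahalf : a ≤ 1 / 2 := by
        rw [haeq, div_le_iff₀ (Real.exp_pos _)]
        linarith
      have h2a : 2 * a ≤ Real.exp ((N : ℝ) - j) := by
        have h2 : 2 * a = 2 * (K:ℝ) / Real.exp ((j:ℝ)+1) := by rw [haeq]; ring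
        rw [h2, div_le_iff₀ (Real.exp_pos _), ← Real.exp_add]
        refine hexpN.trans (Real.exp_le_exp.2 (by linarith))
      calc τ {x : ℕ → Fin K | (j : ℝ≥0∞) + 1 < F x}
          = τ {x : ℕ → Fin K | ENNReal.ofReal ((j:ℝ)+1) < F x} := by rw [hset]
        _ ≤ ∑' n : ℕ, ENNReal.ofReal (((K : ℝ) * Real.exp (-((j:ℝ)+1))) ^ (n + 1)) :=
            meas_sup_gt τ ht
        _ ≤ ENNReal.ofReal (2 * a) := tsum_pow_le ha0 hahalf
        _ ≤ ENNReal.ofReal (Real.exp ((N : ℝ) - j)) := ENNReal.ofReal_le_ofReal h2a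
  -- Step 3 : geometric series is finite
  have hsum_fin : ∑' j : ℕ, τ {x : ℕ → Fin K | (j : ℝ≥0∞) + 1 < F x}
      ≤ ENNReal.ofReal (Real.exp (N : ℝ)) * (1 - ENNReal.ofReal (Real.exp (-1)))⁻¹ := by
    calc ∑' j : ℕ, τ {x : ℕ → Fin K | (j : ℝ≥0∞) + 1 < F x}
        ≤ ∑' j : ℕ, ENNReal.ofReal (Real.exp ((N : ℝ) - j)) := ENNReal.tsum_le_tsum hbound
      _ = ∑' j : ℕ, ENNReal.ofReal (Real.exp (N : ℝ)) * (ENNReal.ofReal (Real.exp (-1))) ^ j := by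
          refine tsum_congr fun j => ?_
          rw [← ENNReal.ofReal_pow (Real.exp_nonneg _), ← Real.exp_nat_mul,
            ← ENNReal.ofReal_mul (Real.exp_nonneg _), ← Real.exp_add]
          congr 1
          ring
      _ = ENNReal.ofReal (Real.exp (N : ℝ)) * (1 - ENNReal.ofReal (Real.exp (-1)))⁻¹ := by
          rw [ENNReal.tsum_mul_left, ENNReal.tsum_geometric]
  have hfin : ENNReal.ofReal (Real.exp (N : ℝ)) * (1 - ENNReal.ofReal (Real.exp (-1)))⁻¹ < ⊤ := by
    refine ENNReal.mul_lt_top ENNReal.ofReal_lt_top ?_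
    rw [ENNReal.inv_lt_top, tsub_pos_iff_lt]
    exact ENNReal.ofReal_lt_one.2 (Real.exp_lt_one_iff.2 (by norm_num))
  refine key.trans_lt ?_
  exact ENNReal.add_lt_top.2 ⟨ENNReal.one_lt_top, hsum_fin.trans_lt hfin⟩
end

section
/- Weak law of large numbers with arbitrary weights: let ν₀ be a Borel probability measure on ℝ with finite expectation m. Let (p^n)_{n≥1} be a proper sequence of probability vectors, i.e. each p^n = (p^n_1,...,p^n_{N_n}) has nonnegative entries summing to 1 and max{p^n_j : 1 ≤ j ≤ N_n} → 0 as n → ∞. For each n, let Z_1,...,Z_{N_n} be independent random variables each with law ν₀, and let ν_n be the law of Σ_{j=1}^{N_n} p^n_j Z_j. Then ν_n converges weakly to the Dirac measure at m. -/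
open MeasureTheory Filter Set

section WLLNHelpers

variable {ν : Measure ℝ} [IsProbabilityMeasure ν] {N : ℕ}

lemma wlln_pi_integral_prod (f : Fin N → ℝ → ℝ) :
    ∫ z, (∏ i, f i (z i)) ∂(Measure.pi fun _ : Fin N => ν) = ∏ i, ∫ t, f i t ∂ν := by
  letI : MeasureSpace ℝ := { volume := ν }
  exact integral_fintype_prod_eq_prod f

lemma wlln_pi_integrable_prod (f : Fin N → ℝ → ℝ) (hf : ∀ i, Integrable (f i) ν) :
    Integrable (fun z => ∏ i, f i (z i)) (Measure.pi fun _ : Fin N => ν) := by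
  letI : MeasureSpace ℝ := { volume := ν }
  exact Integrable.fintype_prod hf

lemma wlln_pi_integral_eval (f : ℝ → ℝ) (j : Fin N) :
    ∫ z, f (z j) ∂(Measure.pi fun _ : Fin N => ν) = ∫ t, f t ∂ν := by
  classical
  calc ∫ z, f (z j) ∂(Measure.pi fun _ : Fin N => ν)
      = ∫ z, (∏ i, (fun (i : Fin N) (t : ℝ) => if i = j then f t else 1) i (z i))
          ∂(Measure.pi fun _ : Fin N => ν) := by
        congr 1; funext z
        rw [show (∏ i, (fun (i : Fin N) (t : ℝ) => if i = j then f t else 1) i (z i))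
            = ∏ i, (if i = j then f (z i) else 1) from rfl,
          Finset.prod_ite_eq' Finset.univ j (fun i => f (z i))]
        simp
    _ = ∏ i, ∫ t, (if i = j then f t else 1) ∂ν :=
        wlln_pi_integral_prod (ν := ν) (fun (i : Fin N) (t : ℝ) => if i = j then f t else 1)
    _ = ∫ t, f t ∂ν := by
        rw [Finset.prod_eq_single j]
        · simp
        · intro i _ hij; simp [hij]
        · simp

lemma wlln_pi_integrable_eval (f : ℝ → ℝ) (hf : Integrable f ν) (j : Fin N) :
    Integrable (fun z => f (z j)) (Measure.pi fun _ : Fin N => ν) := by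
  classical
  have h := wlln_pi_integrable_prod (ν := ν)
    (fun (i : Fin N) (t : ℝ) => if i = j then f t else 1)
    (fun i => by by_cases hij : i = j <;> simp [hij, hf, integrable_const])
  refine h.congr (Filter.Eventually.of_forall fun z => ?_)
  show (∏ i, (if i = j then f (z i) else 1)) = f (z j)
  rw [Finset.prod_ite_eq' Finset.univ j (fun i => f (z i))]
  simp

lemma wlln_pi_integral_eval_mul (f g : ℝ → ℝ) {j k : Fin N} (hjk : j ≠ k) :
    ∫ z, f (z j) * g (z k) ∂(Measure.pi fun _ : Fin N => ν)
      = (∫ t, f t ∂ν) * (∫ t, g t ∂ν) := by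
  classical
  have hkj : k ≠ j := hjk.symm
  set F : Fin N → ℝ → ℝ := fun i t => if i = j then f t else if i = k then g t else 1 with hF
  have h1 : ∀ z : Fin N → ℝ, f (z j) * g (z k) = ∏ i, F i (z i) := by
    intro z
    rw [← Finset.mul_prod_erase Finset.univ (fun i => F i (z i)) (Finset.mem_univ j)]
    rw [← Finset.mul_prod_erase (Finset.univ.erase j) (fun i => F i (z i))
      (Finset.mem_erase.2 ⟨hkj, Finset.mem_univ k⟩)]
    have : ∏ i ∈ (Finset.univ.erase j).erase k, F i (z i) = 1 := by
      apply Finset.prod_eq_one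
      intro i hi
      obtain ⟨hik, hij⟩ := by simpa [Finset.mem_erase] using hi
      simp [hF, hij, hik]
    rw [this]
    simp [hF, hkj]
  have h2 : ∀ i : Fin N, ∫ t, F i t ∂ν =
      if i = j then ∫ t, f t ∂ν else if i = k then ∫ t, g t ∂ν else 1 := by
    intro i
    by_cases hij : i = j
    · simp [hF, hij, hkj]
    · by_cases hik : i = k <;> simp [hF, hij, hik, hkj]
  calc ∫ z, f (z j) * g (z k) ∂(Measure.pi fun _ : Fin N => ν)
      = ∫ z, ∏ i, F i (z i) ∂(Measure.pi fun _ : Fin N => ν) := by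
        congr 1; funext z; exact h1 z
    _ = ∏ i, ∫ t, F i t ∂ν := wlln_pi_integral_prod (ν := ν) F
    _ = (∫ t, f t ∂ν) * (∫ t, g t ∂ν) := by
        rw [Finset.prod_congr rfl fun i _ => h2 i]
        rw [← Finset.mul_prod_erase Finset.univ _ (Finset.mem_univ j)]
        rw [← Finset.mul_prod_erase (Finset.univ.erase j) _
          (Finset.mem_erase.2 ⟨hkj, Finset.mem_univ k⟩)]
        have : ∏ i ∈ (Finset.univ.erase j).erase k,
            (if i = j then ∫ t, f t ∂ν else if i = k then ∫ t, g t ∂ν else 1) = 1 := by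
          apply Finset.prod_eq_one
          intro i hi
          obtain ⟨hik, hij⟩ := by simpa [Finset.mem_erase] using hi
          simp [hij, hik]
        rw [this]
        simp [hkj]

lemma wlln_integrable_of_abs_le {α : Type*} [MeasurableSpace α] {μ : Measure α}
    [IsFiniteMeasure μ] {f : α → ℝ} (hm : AEStronglyMeasurable f μ) {C : ℝ}
    (h : ∀ x, |f x| ≤ C) : Integrable f μ :=
  ⟨hm, HasFiniteIntegral.of_bounded (C := C)
    (Filter.Eventually.of_forall fun x => by simpa [Real.norm_eq_abs] using h x)⟩

/-- Second moment bound for a weighted sum of iid centered bounded variables. -/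
lemma wlln_second_moment (F : ℝ → ℝ) (hFm : Measurable F) {D : ℝ} (hD : ∀ t, |F t| ≤ D)
    (hF0 : ∫ t, F t ∂ν = 0) (q : Fin N → ℝ) :
    ∫ z, (∑ j, q j * F (z j)) ^ 2 ∂(Measure.pi fun _ : Fin N => ν)
      ≤ (∑ j, (q j) ^ 2) * D ^ 2 := by
  classical
  have hFsq : ∀ t, (F t) ^ 2 ≤ D ^ 2 := by
    intro t
    have h1 := hD t
    nlinarith [abs_nonneg (F t), sq_abs (F t)]
  have hFint : Integrable F ν := wlln_integrable_of_abs_le hFm.aestronglyMeasurable hD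
  have hF2int : Integrable (fun t => (F t) ^ 2) ν := by
    refine wlln_integrable_of_abs_le (hFm.pow_const 2).aestronglyMeasurable (C := D ^ 2) ?_
    intro t
    rw [abs_of_nonneg (sq_nonneg _)]
    exact hFsq t
  have hF2le : ∫ t, (F t) ^ 2 ∂ν ≤ D ^ 2 := by
    calc ∫ t, (F t) ^ 2 ∂ν ≤ ∫ _t, D ^ 2 ∂ν :=
          integral_mono hF2int (integrable_const _) hFsq
      _ = D ^ 2 := by simp
  have hterm_int : ∀ j k : Fin N,
      Integrable (fun z => (q j * F (z j)) * (q k * F (z k))) (Measure.pi fun _ : Fin N => ν) := by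
    intro j k
    refine wlln_integrable_of_abs_le ?_ (C := (|q j| * D) * (|q k| * D)) ?_
    · exact (((hFm.comp (measurable_pi_apply j)).const_mul (q j)).mul
        ((hFm.comp (measurable_pi_apply k)).const_mul (q k))).aestronglyMeasurable
    · intro z
      have hD0 : 0 ≤ D := le_trans (abs_nonneg _) (hD 0)
      rw [abs_mul, abs_mul, abs_mul]
      exact mul_le_mul (mul_le_mul_of_nonneg_left (hD _) (abs_nonneg _))
        (mul_le_mul_of_nonneg_left (hD _) (abs_nonneg _))
        (by positivity) (by positivity)
  have hexp : ∀ z : Fin N → ℝ, (∑ j, q j * F (z j)) ^ 2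
      = ∑ j, ∑ k, (q j * F (z j)) * (q k * F (z k)) := by
    intro z
    rw [sq, Finset.sum_mul_sum]
  have hsum : ∫ z, (∑ j, q j * F (z j)) ^ 2 ∂(Measure.pi fun _ : Fin N => ν)
      = ∑ j, ∑ k, ∫ z, (q j * F (z j)) * (q k * F (z k)) ∂(Measure.pi fun _ : Fin N => ν) := by
    rw [show (fun z : Fin N → ℝ => (∑ j, q j * F (z j)) ^ 2)
        = fun z => ∑ j, ∑ k, (q j * F (z j)) * (q k * F (z k)) from funext hexp]
    rw [integral_finset_sum _ fun j _ =>
      integrable_finset_sum _ fun k _ => hterm_int j k]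
    exact Finset.sum_congr rfl fun j _ => integral_finset_sum _ fun k _ => hterm_int j k
  have hval : ∀ j k : Fin N, ∫ z, (q j * F (z j)) * (q k * F (z k)) ∂(Measure.pi fun _ : Fin N => ν)
      = if j = k then (q j) ^ 2 * ∫ t, (F t) ^ 2 ∂ν else 0 := by
    intro j k
    by_cases hjk : j = k
    · subst hjk
      rw [if_pos rfl]
      calc ∫ z, (q j * F (z j)) * (q j * F (z j)) ∂(Measure.pi fun _ : Fin N => ν)
          = ∫ z, (q j) ^ 2 * (fun t => (F t) ^ 2) (z j) ∂(Measure.pi fun _ : Fin N => ν) := by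
            congr 1; funext z; ring
        _ = (q j) ^ 2 * ∫ z, (fun t => (F t) ^ 2) (z j) ∂(Measure.pi fun _ : Fin N => ν) := integral_const_mul _ _
        _ = (q j) ^ 2 * ∫ t, (F t) ^ 2 ∂ν := by
            rw [wlln_pi_integral_eval (ν := ν) (fun t => (F t) ^ 2) j]
    · rw [if_neg hjk]
      calc ∫ z, (q j * F (z j)) * (q k * F (z k)) ∂(Measure.pi fun _ : Fin N => ν)
          = ∫ z, (fun t => q j * F t) (z j) * (fun t => q k * F t) (z k) ∂(Measure.pi fun _ : Fin N => ν) := rfl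
        _ = (∫ t, q j * F t ∂ν) * (∫ t, q k * F t ∂ν) :=
            wlln_pi_integral_eval_mul (ν := ν) (fun t => q j * F t) (fun t => q k * F t) hjk
        _ = 0 := by
            rw [integral_const_mul, integral_const_mul, hF0]
            ring
  rw [hsum]
  calc ∑ j, ∑ k, ∫ z, (q j * F (z j)) * (q k * F (z k)) ∂(Measure.pi fun _ : Fin N => ν)
      = ∑ j : Fin N, (q j) ^ 2 * ∫ t, (F t) ^ 2 ∂ν := by
        refine Finset.sum_congr rfl fun j _ => ?_
        rw [Finset.sum_congr rfl fun k _ => hval j k]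
        rw [Finset.sum_ite_eq Finset.univ j (fun _ => (q j) ^ 2 * ∫ t, (F t) ^ 2 ∂ν)]
        simp
    _ ≤ ∑ j : Fin N, (q j) ^ 2 * D ^ 2 :=
        Finset.sum_le_sum fun j _ => mul_le_mul_of_nonneg_left hF2le (sq_nonneg _)
    _ = (∑ j, (q j) ^ 2) * D ^ 2 := (Finset.sum_mul _ _ _).symm

/-- The tail part of an integrable function tends to zero. -/
lemma wlln_tail_tendsto (hint : Integrable (fun t : ℝ => t) ν) :
    Tendsto (fun K : ℕ => ∫ t, |if |t| ≤ (K : ℝ) then 0 else t| ∂ν) atTop (nhds 0) := by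
  have h := tendsto_integral_of_dominated_convergence (μ := ν)
    (F := fun (K : ℕ) (t : ℝ) => |if |t| ≤ (K : ℝ) then 0 else t|)
    (f := fun _ => (0 : ℝ)) (bound := fun t => |t|)
    (fun K => by
      refine (Measurable.abs ?_).aestronglyMeasurable
      exact Measurable.ite (measurableSet_le measurable_id.abs measurable_const)
        measurable_const measurable_id)
    (hint.abs)
    (fun K => Filter.Eventually.of_forall fun t => by
      rw [Real.norm_eq_abs, abs_abs]
      by_cases h : |t| ≤ (K : ℝ) <;> simp [h, abs_nonneg])
    (Filter.Eventually.of_forall fun t => by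
      refine tendsto_atTop_of_eventually_const (i₀ := Nat.ceil |t|) fun K hK => ?_
      have : |t| ≤ (K : ℝ) := le_trans (Nat.le_ceil _) (by exact_mod_cast hK)
      simp [this])
  simpa using h

end WLLNHelpers

set_option maxHeartbeats 1000000 in
/-- Weak law of large numbers with arbitrary weights: if `ν₀` is a Borel
probability measure on `ℝ` with expectation `m`, and `(p^n)` is a proper sequence of
probability vectors (maximal entry tending to `0`), then the law `ν_n` of
`∑_j p^n_j Z_j` — where `Z_1, …, Z_{N_n}` are i.i.d. with law `ν₀`, so that `ν_n` is the
pushforward of the product measure `ν₀^{N_n}` — converges weakly to the Dirac measure at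
`m`: the integral of every bounded continuous function converges to its value at `m`. -/
theorem weighted_weak_law_of_large_numbers
    (ν₀ : Measure ℝ) [IsProbabilityMeasure ν₀]
    (m : ℝ) (hint : Integrable (fun t : ℝ => t) ν₀) (hm : ∫ t, t ∂ν₀ = m)
    (N : ℕ → ℕ) (p : ∀ n : ℕ, Fin (N n) → ℝ)
    (hp0 : ∀ n j, 0 ≤ p n j) (hp1 : ∀ n, ∑ j, p n j = 1)
    (hpmax : ∀ ε > 0, ∀ᶠ n in atTop, ∀ j, p n j ≤ ε)
    (g : ℝ → ℝ) (hgc : Continuous g) (hgb : ∃ C, ∀ t, |g t| ≤ C) :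
    Tendsto
      (fun n => ∫ z, g (∑ j, p n j * z j) ∂(Measure.pi fun _ : Fin (N n) => ν₀))
      atTop (nhds (g m)) := by
  classical
  obtain ⟨C, hC⟩ := hgb
  have hC0 : 0 ≤ C := le_trans (abs_nonneg _) (hC 0)
  -- basic measurability / integrability for the weighted sums
  have hSmeas : ∀ n, Measurable (fun z : Fin (N n) → ℝ => ∑ j, p n j * z j) := by
    intro n
    exact Finset.measurable_sum _ fun j _ => (measurable_pi_apply j).const_mul _
  have hSint : ∀ n, Integrable (fun z : Fin (N n) → ℝ => ∑ j, p n j * z j)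
      (Measure.pi fun _ : Fin (N n) => ν₀) := by
    intro n
    exact integrable_finset_sum _ fun j _ =>
      (wlln_pi_integrable_eval (ν := ν₀) (fun t => t) hint j).const_mul _
  -- Key step: L¹ convergence of the weighted sums to m.
  have key : ∀ ε > (0 : ℝ), ∀ᶠ n in atTop,
      (∫ z, |(∑ j, p n j * z j) - m| ∂(Measure.pi fun _ : Fin (N n) => ν₀)) ≤ ε := by
    intro ε hε
    set ε' : ℝ := ε / 4 with hε'
    have hε'0 : 0 < ε' := by positivity
    -- choose the truncation level K
    obtain ⟨K, hK⟩ : ∃ K : ℕ, ∫ t, |if |t| ≤ (K : ℝ) then 0 else t| ∂ν₀ < ε' :=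
      ((wlln_tail_tendsto hint).eventually (gt_mem_nhds hε'0)).exists
    set ψ : ℝ → ℝ := fun t => if |t| ≤ (K : ℝ) then 0 else t with hψ
    set φ : ℝ → ℝ := fun t => t - ψ t with hφ
    have hψm : Measurable ψ :=
      Measurable.ite (measurableSet_le measurable_id.abs measurable_const)
        measurable_const measurable_id
    have hφm : Measurable φ := measurable_id.sub hψm
    have hφbd : ∀ t, |φ t| ≤ (K : ℝ) := by
      intro t
      by_cases h : |t| ≤ (K : ℝ) <;> simp [hφ, hψ, h]
    have hφint : Integrable φ ν₀ := wlln_integrable_of_abs_le hφm.aestronglyMeasurable hφbd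
    have hψint : Integrable ψ ν₀ := by
      have : ψ = fun t => t - φ t := by funext t; simp [hφ]
      rw [this]; exact hint.sub hφint
    set a : ℝ := ∫ t, φ t ∂ν₀ with ha
    set b : ℝ := ∫ t, ψ t ∂ν₀ with hb
    have hab : a + b = m := by
      rw [ha, hb, ← integral_add hφint hψint]
      simp only [hφ]
      rw [show (fun t => t - ψ t + ψ t) = fun t : ℝ => t by funext t; ring]
      exact hm
    have habs : |a| ≤ (K : ℝ) := by
      calc |a| ≤ ∫ t, |φ t| ∂ν₀ := by
            rw [ha]
            simpa [Real.norm_eq_abs] using norm_integral_le_integral_norm (μ := ν₀) φ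
        _ ≤ ∫ _t, (K : ℝ) ∂ν₀ := integral_mono hφint.abs (integrable_const _) hφbd
        _ = (K : ℝ) := by simp
    have hbabs : |b| ≤ ε' := by
      calc |b| ≤ ∫ t, |ψ t| ∂ν₀ := by
            rw [hb]
            simpa [Real.norm_eq_abs] using norm_integral_le_integral_norm (μ := ν₀) ψ
        _ ≤ ε' := le_of_lt hK
    set F : ℝ → ℝ := fun t => φ t - a with hF
    set G : ℝ → ℝ := fun t => ψ t - b with hG
    have hFm : Measurable F := hφm.sub measurable_const
    set D : ℝ := 2 * (K : ℝ) with hD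
    have hFbd : ∀ t, |F t| ≤ D := by
      intro t
      calc |F t| ≤ |φ t| + |a| := abs_sub (φ t) a
        _ ≤ (K : ℝ) + (K : ℝ) := add_le_add (hφbd t) habs
        _ = D := by rw [hD]; ring
    have hF0 : ∫ t, F t ∂ν₀ = 0 := by
      rw [hF]
      rw [integral_sub hφint (integrable_const _)]
      simp [ha]
    have hGint : Integrable G ν₀ := hψint.sub (integrable_const _)
    have hGabs : ∫ t, |G t| ∂ν₀ ≤ 2 * ε' := by
      calc ∫ t, |G t| ∂ν₀ ≤ ∫ t, (|ψ t| + |b|) ∂ν₀ :=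
            integral_mono hGint.abs (hψint.abs.add (integrable_const _))
              (fun t => abs_sub (ψ t) b)
        _ = (∫ t, |ψ t| ∂ν₀) + |b| := by
            rw [integral_add hψint.abs (integrable_const _)]; simp
        _ ≤ ε' + ε' := add_le_add (le_of_lt hK) hbabs
        _ = 2 * ε' := by ring
    set δ : ℝ := ε' ^ 2 / (D ^ 2 + 1) with hδ
    have hδ0 : 0 < δ := by
      apply div_pos (by positivity)
      have : (0:ℝ) ≤ D ^ 2 := sq_nonneg _
      linarith
    filter_upwards [hpmax δ hδ0] with n hn
    set μ : Measure (Fin (N n) → ℝ) := Measure.pi fun _ : Fin (N n) => ν₀ with hμdef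
    haveI : IsProbabilityMeasure μ := by rw [hμdef]; infer_instance
    have hq2 : ∑ j, (p n j) ^ 2 ≤ δ := by
      calc ∑ j, (p n j) ^ 2 ≤ ∑ j, p n j * δ := by
            refine Finset.sum_le_sum fun j _ => ?_
            rw [sq]
            exact mul_le_mul_of_nonneg_left (hn j) (hp0 n j)
        _ = δ := by rw [← Finset.sum_mul, hp1 n, one_mul]
    -- decomposition
    have hdecomp : ∀ z : Fin (N n) → ℝ, (∑ j, p n j * z j) - m
        = (∑ j, p n j * F (z j)) + (∑ j, p n j * G (z j)) := by
      intro z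
      have h1 : ∀ j, p n j * F (z j) + p n j * G (z j) = p n j * z j - p n j * m := by
        intro j
        have h2 : F (z j) + G (z j) = z j - m := by
          rw [hF, hG, ← hab]
          simp only [hφ]
          ring
        calc p n j * F (z j) + p n j * G (z j) = p n j * (F (z j) + G (z j)) := by ring
          _ = p n j * z j - p n j * m := by rw [h2]; ring
      calc (∑ j, p n j * z j) - m = (∑ j, p n j * z j) - (∑ j, p n j) * m := by
            rw [hp1 n, one_mul]
        _ = ∑ j, (p n j * z j - p n j * m) := by
            rw [Finset.sum_mul, ← Finset.sum_sub_distrib]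
        _ = ∑ j, (p n j * F (z j) + p n j * G (z j)) :=
            Finset.sum_congr rfl fun j _ => (h1 j).symm
        _ = (∑ j, p n j * F (z j)) + (∑ j, p n j * G (z j)) := Finset.sum_add_distrib
    -- integrability of both parts
    have hWmeas : Measurable (fun z : Fin (N n) → ℝ => ∑ j, p n j * F (z j)) :=
      Finset.measurable_sum _ fun j _ =>
        (hFm.comp (measurable_pi_apply j)).const_mul _
    have hWint : Integrable (fun z : Fin (N n) → ℝ => ∑ j, p n j * F (z j)) μ := by
      refine wlln_integrable_of_abs_le hWmeas.aestronglyMeasurable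
        (C := ∑ j, |p n j| * D) ?_
      intro z
      calc |∑ j, p n j * F (z j)| ≤ ∑ j, |p n j * F (z j)| :=
            Finset.abs_sum_le_sum_abs _ _
        _ ≤ ∑ j, |p n j| * D := by
            refine Finset.sum_le_sum fun j _ => ?_
            rw [abs_mul]
            exact mul_le_mul_of_nonneg_left (hFbd _) (abs_nonneg _)
    have hVint : Integrable (fun z : Fin (N n) → ℝ => ∑ j, p n j * G (z j)) μ :=
      integrable_finset_sum _ fun j _ =>
        (wlln_pi_integrable_eval (ν := ν₀) G hGint j).const_mul _
    -- bound for the G part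
    have hBG : ∫ z, |∑ j, p n j * G (z j)| ∂μ ≤ 2 * ε' := by
      have hint1 : Integrable (fun z : Fin (N n) → ℝ => ∑ j, p n j * |G (z j)|) μ :=
        integrable_finset_sum _ fun j _ =>
          (wlln_pi_integrable_eval (ν := ν₀) (fun t => |G t|) hGint.abs j).const_mul _
      calc ∫ z, |∑ j, p n j * G (z j)| ∂μ
          ≤ ∫ z, (∑ j, p n j * |G (z j)|) ∂μ := by
            refine integral_mono hVint.abs hint1 fun z => ?_
            calc |∑ j, p n j * G (z j)| ≤ ∑ j, |p n j * G (z j)| :=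
                  Finset.abs_sum_le_sum_abs _ _
              _ = ∑ j, p n j * |G (z j)| := by
                  refine Finset.sum_congr rfl fun j _ => ?_
                  rw [abs_mul, abs_of_nonneg (hp0 n j)]
        _ = ∑ j, p n j * ∫ z, (fun t => |G t|) (z j) ∂μ := by
            rw [integral_finset_sum _ fun j _ =>
              (wlln_pi_integrable_eval (ν := ν₀) (fun t => |G t|) hGint.abs j).const_mul _]
            exact Finset.sum_congr rfl fun j _ => integral_const_mul _ _
        _ = ∑ j, p n j * ∫ t, |G t| ∂ν₀ := by
            refine Finset.sum_congr rfl fun j _ => ?_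
            rw [wlln_pi_integral_eval (ν := ν₀) (fun t => |G t|) j]
        _ ≤ ∑ j, p n j * (2 * ε') :=
            Finset.sum_le_sum fun j _ => mul_le_mul_of_nonneg_left hGabs (hp0 n j)
        _ = 2 * ε' := by rw [← Finset.sum_mul, hp1 n, one_mul]
    -- bound for the F part
    have hAF : ∫ z, |∑ j, p n j * F (z j)| ∂μ ≤ 2 * ε' := by
      have hsq_le : ∫ z, (∑ j, p n j * F (z j)) ^ 2 ∂μ ≤ ε' ^ 2 := by
        calc ∫ z, (∑ j, p n j * F (z j)) ^ 2 ∂μ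
            ≤ (∑ j, (p n j) ^ 2) * D ^ 2 :=
              wlln_second_moment (ν := ν₀) F hFm hFbd hF0 (p n)
          _ ≤ δ * D ^ 2 := mul_le_mul_of_nonneg_right hq2 (sq_nonneg _)
          _ ≤ ε' ^ 2 := by
              rw [hδ, div_mul_eq_mul_div, div_le_iff₀ (by positivity)]
              nlinarith [sq_nonneg D, sq_nonneg ε']
      have hW2int : Integrable (fun z : Fin (N n) → ℝ => (∑ j, p n j * F (z j)) ^ 2) μ := by
        refine wlln_integrable_of_abs_le (hWmeas.pow_const 2).aestronglyMeasurable
          (C := (∑ j, |p n j| * D) ^ 2) ?_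
        intro z
        rw [abs_of_nonneg (sq_nonneg _), ← sq_abs]
        have h1 : |∑ j, p n j * F (z j)| ≤ ∑ j, |p n j| * D := by
          calc |∑ j, p n j * F (z j)| ≤ ∑ j, |p n j * F (z j)| :=
                Finset.abs_sum_le_sum_abs _ _
            _ ≤ ∑ j, |p n j| * D := by
                refine Finset.sum_le_sum fun j _ => ?_
                rw [abs_mul]
                exact mul_le_mul_of_nonneg_left (hFbd _) (abs_nonneg _)
        exact pow_le_pow_left₀ (abs_nonneg _) h1 2
      calc ∫ z, |∑ j, p n j * F (z j)| ∂μ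
          ≤ ∫ z, (ε' + (∑ j, p n j * F (z j)) ^ 2 / ε') ∂μ := by
            refine integral_mono hWint.abs
              ((integrable_const _).add (hW2int.div_const _)) fun z => ?_
            set w := ∑ j, p n j * F (z j) with hw
            have h2 : ε' * (ε' + w ^ 2 / ε') = ε' * ε' + w ^ 2 := by
              field_simp
            have h3 : ε' * |w| ≤ ε' * (ε' + w ^ 2 / ε') := by
              rw [h2]
              nlinarith [sq_nonneg (|w| - ε'), sq_abs w, abs_nonneg w]
            exact le_of_mul_le_mul_left h3 hε'0
        _ = ε' + (∫ z, (∑ j, p n j * F (z j)) ^ 2 ∂μ) / ε' := by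
            rw [integral_add (integrable_const _) (hW2int.div_const _)]
            simp [integral_div]
        _ ≤ ε' + ε' ^ 2 / ε' := by
            gcongr
        _ = 2 * ε' := by
            rw [sq, mul_div_assoc, div_self (ne_of_gt hε'0)]
            ring
    -- combine
    calc ∫ z, |(∑ j, p n j * z j) - m| ∂μ
        = ∫ z, |(∑ j, p n j * F (z j)) + (∑ j, p n j * G (z j))| ∂μ := by
          congr 1; funext z; rw [hdecomp z]
      _ ≤ ∫ z, (|∑ j, p n j * F (z j)| + |∑ j, p n j * G (z j)|) ∂μ :=
          integral_mono (hWint.add hVint).abs (hWint.abs.add hVint.abs)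
            (fun z => abs_add_le _ _)
      _ = (∫ z, |∑ j, p n j * F (z j)| ∂μ) + ∫ z, |∑ j, p n j * G (z j)| ∂μ :=
          integral_add hWint.abs hVint.abs
      _ ≤ 2 * ε' + 2 * ε' := add_le_add hAF hBG
      _ = ε := by rw [hε']; ring
  -- From L¹ convergence to convergence of integrals of g.
  rw [Metric.tendsto_atTop]
  intro ε hε
  obtain ⟨δ, hδ0, hδ⟩ := Metric.continuousAt_iff.mp (hgc.continuousAt (x := m))
    (ε / 4) (by positivity)
  set η : ℝ := ε * δ / (8 * (C + 1)) with hη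
  have hη0 : 0 < η := by positivity
  obtain ⟨n₀, hn₀⟩ := (atTop_basis.eventually_iff.mp (key η hη0))
  refine ⟨n₀, fun n hn => ?_⟩
  have hTn := hn₀.2 hn
  set μ : Measure (Fin (N n) → ℝ) := Measure.pi fun _ : Fin (N n) => ν₀ with hμdef
  haveI : IsProbabilityMeasure μ := by rw [hμdef]; infer_instance
  have hgS_meas : Measurable (fun z : Fin (N n) → ℝ => g (∑ j, p n j * z j)) :=
    hgc.measurable.comp (hSmeas n)
  have hgSint : Integrable (fun z : Fin (N n) → ℝ => g (∑ j, p n j * z j)) μ :=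
    wlln_integrable_of_abs_le hgS_meas.aestronglyMeasurable (C := C) fun z => hC _
  have hSm_int : Integrable (fun z : Fin (N n) → ℝ => |(∑ j, p n j * z j) - m|) μ :=
    ((hSint n).sub (integrable_const _)).abs
  -- pointwise bound
  have hptwise : ∀ z : Fin (N n) → ℝ,
      |g (∑ j, p n j * z j) - g m| ≤ ε / 4 + (2 * C / δ) * |(∑ j, p n j * z j) - m| := by
    intro z
    set s := ∑ j, p n j * z j
    by_cases h : |s - m| < δ
    · have h1 : dist s m < δ := by rwa [Real.dist_eq]
      have h2 := hδ h1
      rw [Real.dist_eq] at h2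
      have h3 : 0 ≤ (2 * C / δ) * |s - m| := by positivity
      linarith [le_of_lt h2]
    · push_neg at h
      have h1 : |g s - g m| ≤ 2 * C := by
        calc |g s - g m| ≤ |g s| + |g m| := abs_sub _ _
          _ ≤ C + C := add_le_add (hC s) (hC m)
          _ = 2 * C := by ring
      have h2 : 2 * C ≤ (2 * C / δ) * |s - m| := by
        rw [div_mul_eq_mul_div, le_div_iff₀ hδ0]
        exact mul_le_mul_of_nonneg_left h (by positivity)
      have h3 : 0 < ε / 4 := by positivity
      linarith
    -- end pointwise
  have hbound : |(∫ z, g (∑ j, p n j * z j) ∂μ) - g m|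
      ≤ ε / 4 + (2 * C / δ) * ∫ z, |(∑ j, p n j * z j) - m| ∂μ := by
    have h1 : (∫ z, g (∑ j, p n j * z j) ∂μ) - g m
        = ∫ z, (g (∑ j, p n j * z j) - g m) ∂μ := by
      rw [integral_sub hgSint (integrable_const _), integral_const]
      simp
    rw [h1]
    calc |∫ z, (g (∑ j, p n j * z j) - g m) ∂μ|
        ≤ ∫ z, |g (∑ j, p n j * z j) - g m| ∂μ := by
          simpa [Real.norm_eq_abs] using
            norm_integral_le_integral_norm (μ := μ)
              (fun z => g (∑ j, p n j * z j) - g m)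
      _ ≤ ∫ z, (ε / 4 + (2 * C / δ) * |(∑ j, p n j * z j) - m|) ∂μ := by
          refine integral_mono (hgSint.sub (integrable_const _)).abs
            ((integrable_const _).add (hSm_int.const_mul _)) hptwise
      _ = ε / 4 + (2 * C / δ) * ∫ z, |(∑ j, p n j * z j) - m| ∂μ := by
          rw [integral_add (integrable_const _) (hSm_int.const_mul _), integral_const]
          simp [integral_const_mul]
  have hfinal : |(∫ z, g (∑ j, p n j * z j) ∂μ) - g m| ≤ ε / 2 := by
    have h2 : (2 * C / δ) * ∫ z, |(∑ j, p n j * z j) - m| ∂μ ≤ ε / 4 := by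
      have hmono : (2 * C / δ) * (∫ z, |(∑ j, p n j * z j) - m| ∂μ) ≤ (2 * C / δ) * η := by
        exact mul_le_mul_of_nonneg_left hTn (by positivity)
      have : (2 * C / δ) * η ≤ ε / 4 := by
        rw [hη, div_mul_div_comm, div_le_div_iff₀ (by positivity) (by norm_num)]
        nlinarith [mul_pos hε hδ0, mul_nonneg (mul_nonneg hε.le hδ0.le) hC0]
      linarith
    linarith [hbound]
  rw [Real.dist_eq]
  calc |(∫ z, g (∑ j, p n j * z j) ∂μ) - g m| ≤ ε / 2 := hfinal
    _ < ε := by linarith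
end

section
/- Size-biased sampling with arbitrary extra weights: let ν₀ be a Borel probability measure on (0,∞) with finite expectation m, and let ν be its size-biased version, defined by ν(A) = (1/m) ∫_A t dν₀(t) for Borel A ⊂ (0,∞). Let (p^n)_{n≥1} be a proper sequence of probability vectors, i.e. each p^n = (p^n_1,...,p^n_{N_n}) has nonnegative entries summing to 1 and max{p^n_j : 1 ≤ j ≤ N_n} → 0 as n → ∞. For each n let Z_1,...,Z_{N_n} be independent random variables each with law ν₀, and let η_n be the Borel probability measure on (0,∞) defined by η_n(B) = E[ (Σ_{j=1}^{N_n} p^n_j Z_j 1_B(Z_j)) / (Σ_{j=1}^{N_n} p^n_j Z_j) ] (this is the law of the size-biased random choice from Z_1,...,Z_{N_n} with extra weights p^n_1,...,p^n_{N_n}). Then η_n converges weakly to ν. -/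
open MeasureTheory Filter Set

lemma marg_integral {n : ℕ} (μ : Measure ℝ) [IsProbabilityMeasure μ] (h : ℝ → ℝ) (j : Fin n) :
    ∫ z : Fin n → ℝ, h (z j) ∂(Measure.pi fun _ => μ) = ∫ t, h t ∂μ := by
  classical
  letI : MeasureSpace ℝ := ⟨μ⟩
  haveI : SigmaFinite (volume : Measure ℝ) := by
    show SigmaFinite μ; infer_instance
  have key : ∫ z : Fin n → ℝ, ∏ i, (if i = j then h else fun _ => (1:ℝ)) (z i)
        ∂(Measure.pi fun _ => μ)
      = ∏ i, ∫ t, (if i = j then h else fun _ => (1:ℝ)) t ∂μ :=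
    integral_fintype_prod_eq_prod (𝕜 := ℝ) (ι := Fin n)
      (fun i => if i = j then h else fun _ => (1:ℝ))
  have hl : ∀ z : Fin n → ℝ, ∏ i, (if i = j then h else fun _ => (1:ℝ)) (z i) = h (z j) := by
    intro z
    rw [Finset.prod_eq_single j]
    · simp
    · intro i _ hij; simp [hij]
    · simp
  have hr : ∏ i, ∫ t, (if i = j then h else fun _ => (1:ℝ)) t ∂μ = ∫ t, h t ∂μ := by
    rw [Finset.prod_eq_single j]
    · simp
    · intro i _ hij; simp [hij]
    · simp
  simp only [hl] at key
  rw [key, hr]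

lemma marg_integrable {n : ℕ} (μ : Measure ℝ) [IsProbabilityMeasure μ] {h : ℝ → ℝ}
    (hi : Integrable h μ) (j : Fin n) :
    Integrable (fun z : Fin n → ℝ => h (z j)) (Measure.pi fun _ => μ) := by
  classical
  letI : MeasureSpace ℝ := ⟨μ⟩
  haveI : SigmaFinite (volume : Measure ℝ) := by
    show SigmaFinite μ; infer_instance
  have key : Integrable (fun z : Fin n → ℝ =>
      ∏ i, (if i = j then h else fun _ => (1:ℝ)) (z i)) (Measure.pi fun _ => μ) :=
    Integrable.fintype_prod (𝕜 := ℝ) (fun i => by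
      rcases eq_or_ne i j with hij | hij
      · simpa [hij] using hi
      · simpa [hij] using (integrable_const (1:ℝ)))
  refine key.congr (Filter.Eventually.of_forall fun z => ?_)
  show ∏ i, (if i = j then h else fun _ => (1:ℝ)) (z i) = h (z j)
  rw [Finset.prod_eq_single j]
  · simp
  · intro i _ hij; simp [hij]
  · simp

lemma eval_mul_integral {n : ℕ} (μ : Measure ℝ) [IsProbabilityMeasure μ] (Y Y' : ℝ → ℝ)
    {j k : Fin n} (hjk : j ≠ k) :
    ∫ z : Fin n → ℝ, Y (z j) * Y' (z k) ∂(Measure.pi fun _ => μ)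
      = (∫ t, Y t ∂μ) * ∫ t, Y' t ∂μ := by
  classical
  letI : MeasureSpace ℝ := ⟨μ⟩
  haveI : SigmaFinite (volume : Measure ℝ) := by
    show SigmaFinite μ; infer_instance
  set c : Fin n → ℝ → ℝ := fun i => if i = j then Y else if i = k then Y' else fun _ => 1 with hc
  have key : ∫ z : Fin n → ℝ, ∏ i, c i (z i) ∂(Measure.pi fun _ => μ)
      = ∏ i, ∫ t, c i t ∂μ := integral_fintype_prod_eq_prod (𝕜 := ℝ) (ι := Fin n) c
  have hprod : ∀ G : Fin n → ℝ, ∏ i, G i = G j * (G k * ∏ i ∈ (Finset.univ.erase j).erase k, G i) := by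
    intro G
    rw [← Finset.mul_prod_erase Finset.univ G (Finset.mem_univ j),
      ← Finset.mul_prod_erase _ G (Finset.mem_erase.2 ⟨Ne.symm hjk, Finset.mem_univ k⟩)]
  have hrest : ∀ z : Fin n → ℝ, ∏ i ∈ (Finset.univ.erase j).erase k, c i (z i) = 1 := by
    intro z
    refine Finset.prod_eq_one fun i hi => ?_
    rcases Finset.mem_erase.1 hi with ⟨hik, hi2⟩
    rcases Finset.mem_erase.1 hi2 with ⟨hij, _⟩
    simp [hc, hij, hik]
  have hrest' : ∏ i ∈ (Finset.univ.erase j).erase k, ∫ t, c i t ∂μ = 1 := by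
    refine Finset.prod_eq_one fun i hi => ?_
    rcases Finset.mem_erase.1 hi with ⟨hik, hi2⟩
    rcases Finset.mem_erase.1 hi2 with ⟨hij, _⟩
    simp [hc, hij, hik]
  have hl : ∀ z : Fin n → ℝ, ∏ i, c i (z i) = Y (z j) * Y' (z k) := by
    intro z
    rw [hprod (fun i => c i (z i)), hrest]
    simp [hc, hjk, Ne.symm hjk]
  simp only [hl] at key
  rw [key, hprod (fun i => ∫ t, c i t ∂μ), hrest']
  simp [hc, hjk, Ne.symm hjk]

lemma eval_mul_integrable {n : ℕ} (μ : Measure ℝ) [IsProbabilityMeasure μ] {Y Y' : ℝ → ℝ}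
    (hY : Integrable Y μ) (hY' : Integrable Y' μ) {j k : Fin n} (hjk : j ≠ k) :
    Integrable (fun z : Fin n → ℝ => Y (z j) * Y' (z k)) (Measure.pi fun _ => μ) := by
  classical
  letI : MeasureSpace ℝ := ⟨μ⟩
  haveI : SigmaFinite (volume : Measure ℝ) := by
    show SigmaFinite μ; infer_instance
  set c : Fin n → ℝ → ℝ := fun i => if i = j then Y else if i = k then Y' else fun _ => 1 with hc
  have key : Integrable (fun z : Fin n → ℝ => ∏ i, c i (z i)) (Measure.pi fun _ => μ) :=
    Integrable.fintype_prod (𝕜 := ℝ) (fun i => by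
      rcases eq_or_ne i j with hij | hij
      · simpa [hc, hij] using hY
      · rcases eq_or_ne i k with hik | hik
        · simpa [hc, hij, hik, Ne.symm hjk] using hY'
        · simpa [hc, hij, hik] using (integrable_const (1:ℝ)))
  refine key.congr (Filter.Eventually.of_forall fun z => ?_)
  show ∏ i, c i (z i) = Y (z j) * Y' (z k)
  rw [← Finset.mul_prod_erase Finset.univ _ (Finset.mem_univ j),
    ← Finset.mul_prod_erase _ _ (Finset.mem_erase.2 ⟨Ne.symm hjk, Finset.mem_univ k⟩),
    Finset.prod_eq_one]
  · simp [hc, hjk, Ne.symm hjk]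
  · intro i hi
    rcases Finset.mem_erase.1 hi with ⟨hik, hi2⟩
    rcases Finset.mem_erase.1 hi2 with ⟨hij, _⟩
    simp [hc, hij, hik]

lemma ratio_est (u s a m C : ℝ) (hm : 0 < m) (hs : 0 < s) (hu : |u| ≤ C * s) :
    |u/s - (1/m)*a| ≤ (2/m)*|u - a| + (2*|a| /m^2)*|s - m| + ((C + |a| /m)*(2/m))*|s - m| := by
  have hC : 0 ≤ C := by nlinarith [le_trans (abs_nonneg u) hu, hs]
  rcases le_or_gt (m/2) s with hbig | hsmall
  · have key : u/s - (1/m)*a = ((u - a)*m + a*(m - s))/(s*m) := by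
      field_simp
      ring
    have h2 : |(u - a)*m + a*(m - s)| ≤ |u - a| *m + |a| *|s - m| := by
      refine le_trans (abs_add_le _ _) ?_
      rw [abs_mul, abs_mul, abs_of_pos hm, abs_sub_comm m s]
    have hsm : 0 < s*m := mul_pos hs hm
    have h3 : (|u - a| *m + |a| *|s - m|)/(s*m) ≤ (|u - a| *m + |a| *|s - m|)/((m/2)*m) := by
      gcongr
    have h4 : (|u - a| *m + |a| *|s - m|)/((m/2)*m) = (2/m)*|u - a| + (2*|a| /m^2)*|s - m| := by
      field_simp
    have h5 : 0 ≤ ((C + |a| /m)*(2/m))*|s - m| := by positivity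
    calc |u/s - (1/m)*a| = |((u - a)*m + a*(m - s))/(s*m)| := by rw [key]
      _ = |(u - a)*m + a*(m - s)| /(s*m) := by rw [abs_div, abs_of_pos hsm]
      _ ≤ (|u - a| *m + |a| *|s - m|)/(s*m) := (div_le_div_iff_of_pos_right hsm).2 h2
      _ ≤ (|u - a| *m + |a| *|s - m|)/((m/2)*m) := h3
      _ = (2/m)*|u - a| + (2*|a| /m^2)*|s - m| := h4
      _ ≤ (2/m)*|u - a| + (2*|a| /m^2)*|s - m| + ((C + |a| /m)*(2/m))*|s - m| := by linarith
  · have habs : |s - m| = m - s := by rw [abs_of_neg (by linarith)]; ring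
    have h1 : (1:ℝ) ≤ (2/m)*|s - m| := by
      rw [habs]
      have e : (2/m)*(m/2) = 1 := by field_simp
      calc (1:ℝ) = (2/m)*(m/2) := e.symm
        _ ≤ (2/m)*(m - s) := mul_le_mul_of_nonneg_left (by linarith) (by positivity)
    have hus : |u/s| ≤ C := by
      rw [abs_div, abs_of_pos hs, div_le_iff₀ hs]
      linarith [hu]
    have hCa : 0 ≤ C + |a| /m := by positivity
    have h2 : |u/s - (1/m)*a| ≤ C + |a| /m := by
      have e : |(1/m)*a| = |a| /m := by
        rw [abs_mul, abs_of_pos (by positivity : (0:ℝ) < 1/m)]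
        ring
      calc |u/s - (1/m)*a| ≤ |u/s| + |(1/m)*a| := abs_sub _ _
        _ ≤ C + |a| /m := by rw [e]; exact add_le_add hus le_rfl
    have h6 : 0 ≤ (2/m)*|u - a| := by positivity
    have h7 : 0 ≤ (2*|a| /m^2)*|s - m| := by positivity
    calc |u/s - (1/m)*a| ≤ C + |a| /m := h2
      _ = (C + |a| /m) * 1 := (mul_one _).symm
      _ ≤ (C + |a| /m) * ((2/m)*|s - m|) := mul_le_mul_of_nonneg_left h1 hCa
      _ = ((C + |a| /m)*(2/m))*|s - m| := by ring
      _ ≤ (2/m)*|u - a| + (2*|a| /m^2)*|s - m| + ((C + |a| /m)*(2/m))*|s - m| := by linarith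
set_option maxHeartbeats 1000000 in
lemma wlln (μ : Measure ℝ) [IsProbabilityMeasure μ]
    (N : ℕ → ℕ) (p : ∀ n : ℕ, Fin (N n) → ℝ)
    (hp0 : ∀ n j, 0 ≤ p n j) (hp1 : ∀ n, ∑ j, p n j = 1)
    (hpmax : ∀ ε > 0, ∀ᶠ n in atTop, ∀ j, p n j ≤ ε)
    (h : ℝ → ℝ) (hint : Integrable h μ) :
    Tendsto (fun n => ∫ z, |∑ j, p n j * h (z j) - ∫ t, h t ∂μ|
        ∂(Measure.pi fun _ : Fin (N n) => μ)) atTop (nhds 0) := by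
  classical
  set a : ℝ := ∫ t, h t ∂μ with ha
  refine Metric.tendsto_nhds.mpr fun ε hε => ?_
  -- truncation
  set b : ℕ → ℝ → ℝ := fun K t => max (-(K:ℝ)) (min (h t) (K:ℝ)) with hb
  have hbm : ∀ K : ℕ, AEStronglyMeasurable (b K) μ := fun K =>
    (aemeasurable_const.max (hint.1.aemeasurable.min aemeasurable_const)).aestronglyMeasurable
  have hb_le : ∀ (K : ℕ) (t : ℝ), |b K t| ≤ (K:ℝ) := by
    intro K t
    rw [abs_le]
    constructor
    · exact le_max_left _ _
    · exact max_le (by simpa using (Nat.cast_nonneg K : (0:ℝ) ≤ K)) (min_le_right _ _)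
  have hb_abs : ∀ (K : ℕ) (t : ℝ), |b K t| ≤ |h t| := by
    intro K t
    rw [abs_le]
    constructor
    · refine le_trans (le_min (neg_abs_le _) ?_) (le_max_right _ _)
      exact le_trans (neg_nonpos.2 (abs_nonneg _)) (Nat.cast_nonneg K)
    · exact max_le (le_trans (neg_nonpos.2 (Nat.cast_nonneg K)) (abs_nonneg _))
        (le_trans (min_le_left _ _) (le_abs_self _))
  have hbint : ∀ K : ℕ, Integrable (b K) μ := fun K =>
    Integrable.mono' (integrable_const (K:ℝ)) (hbm K)
      (Filter.Eventually.of_forall fun t => by simpa [Real.norm_eq_abs] using hb_le K t)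
  have htr : Tendsto (fun K : ℕ => ∫ t, |h t - b K t| ∂μ) atTop (nhds 0) := by
    have h0 : (0:ℝ) = ∫ _t : ℝ, (0:ℝ) ∂μ := by simp
    rw [h0]
    refine tendsto_integral_of_dominated_convergence (fun t => 2 * |h t|)
      (fun K => (hint.sub (hbint K)).1.norm.congr ?_) (hint.abs.const_mul 2) (fun K =>
        Filter.Eventually.of_forall fun t => ?_) (Filter.Eventually.of_forall fun t => ?_)
    · exact Filter.Eventually.of_forall fun t => (Real.norm_eq_abs _)
    · rw [Real.norm_eq_abs, abs_abs]
      calc |h t - b K t| ≤ |h t| + |b K t| := abs_sub _ _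
        _ ≤ 2 * |h t| := by linarith [hb_abs K t]
    · refine tendsto_const_nhds.congr' ?_
      rw [Filter.EventuallyEq, eventually_atTop]
      refine ⟨⌈|h t|⌉₊, fun K hK => ?_⟩
      have hKt : |h t| ≤ (K:ℝ) := le_trans (Nat.le_ceil _) (Nat.cast_le.2 hK)
      have h1 : min (h t) (K:ℝ) = h t := min_eq_left (le_trans (le_abs_self _) hKt)
      have h2 : max (-(K:ℝ)) (h t) = h t :=
        max_eq_right (le_trans (neg_le_neg hKt) (neg_abs_le _))
      simp [hb, h1, h2]
  obtain ⟨K, hK⟩ := eventually_atTop.1 (htr.eventually_lt_const (show (0:ℝ) < ε/8 by linarith))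
  have hKsmall : ∫ t, |h t - b K t| ∂μ < ε / 8 := hK K le_rfl
  set w : ℝ → ℝ := fun t => h t - b K t with hwdef
  have hw_int : Integrable w μ := hint.sub (hbint K)
  set c : ℝ := ∫ t, b K t ∂μ with hc
  have hc_le : |c| ≤ (K:ℝ) := by
    calc |c| ≤ ∫ t, |b K t| ∂μ := by
          simpa [Real.norm_eq_abs] using norm_integral_le_integral_norm (b K) (μ := μ)
      _ ≤ ∫ _t : ℝ, (K:ℝ) ∂μ := integral_mono (hbint K).abs (integrable_const _)
          (fun t => hb_le K t)
      _ = (K:ℝ) := by simp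
  set Y : ℝ → ℝ := fun t => b K t - c with hY
  set M : ℝ := 2*(K:ℝ) + 1 with hM
  have hMpos : 0 < M := by positivity
  have hY_le : ∀ t, |Y t| ≤ M := by
    intro t
    calc |Y t| ≤ |b K t| + |c| := abs_sub _ _
      _ ≤ (K:ℝ) + (K:ℝ) := add_le_add (hb_le K t) hc_le
      _ ≤ M := by simp [hM]; linarith
  have hY_int : Integrable Y μ := (hbint K).sub (integrable_const c)
  have hYc : ∫ t, Y t ∂μ = 0 := by
    rw [hY]
    rw [integral_sub (hbint K) (integrable_const c)]
    simp [hc]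
  have hY2_int : Integrable (fun t => Y t * Y t) μ :=
    Integrable.mono' (integrable_const (M*M)) (hY_int.1.mul hY_int.1)
      (Filter.Eventually.of_forall fun t => by
        rw [Real.norm_eq_abs, abs_mul]
        exact mul_le_mul (hY_le t) (hY_le t) (abs_nonneg _) hMpos.le)
  have hY2_le : ∫ t, Y t * Y t ∂μ ≤ M * M := by
    calc ∫ t, Y t * Y t ∂μ ≤ ∫ _t : ℝ, M*M ∂μ := integral_mono hY2_int (integrable_const _)
          (fun t => by
            have := mul_le_mul (hY_le t) (hY_le t) (abs_nonneg _) hMpos.le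
            rw [← abs_mul] at this
            exact le_trans (le_abs_self _) this)
      _ = M * M := by simp
  have hY2_nonneg : 0 ≤ ∫ t, Y t * Y t ∂μ := integral_nonneg fun t => mul_self_nonneg _
  set δ : ℝ := ε/8 with hδ
  have hδpos : 0 < δ := by positivity
  set ε' : ℝ := ε^2/(32*(M*M+1)) with hε'def
  have hε' : 0 < ε' := by positivity
  have hd : ∫ t, w t ∂μ = a - c := by
    rw [hwdef]; rw [integral_sub hint (hbint K)]
  set d : ℝ := a - c with hddef
  have hdsmall : |d| < ε/8 := by
    rw [← hd]
    calc |∫ t, w t ∂μ| ≤ ∫ t, |w t| ∂μ := by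
          simpa [Real.norm_eq_abs] using norm_integral_le_integral_norm w (μ := μ)
      _ < ε/8 := hKsmall
  filter_upwards [hpmax ε' hε'] with n hpn
  set π : Measure (Fin (N n) → ℝ) := Measure.pi fun _ => μ with hπ
  haveI : IsProbabilityMeasure π := by rw [hπ]; infer_instance
  set Q : (Fin (N n) → ℝ) → ℝ := fun z => (∑ j, p n j * Y (z j))^2 with hQdef
  set F : Fin (N n) → Fin (N n) → (Fin (N n) → ℝ) → ℝ :=
    fun j k z => (p n j * Y (z j)) * (p n k * Y (z k)) with hF
  have hFint : ∀ j k, Integrable (F j k) π := by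
    intro j k
    rcases eq_or_ne j k with rfl | hjk
    · exact ((marg_integrable μ hY2_int j).const_mul (p n j * p n j)).congr
        (Filter.Eventually.of_forall fun z => by simp only [hF]; ring)
    · exact ((eval_mul_integrable μ hY_int hY_int hjk).const_mul (p n j * p n k)
        |>.congr (Filter.Eventually.of_forall fun z => by simp only [hF]; ring))
  have hQsum : ∀ z, Q z = ∑ j, ∑ k, F j k z := by
    intro z
    rw [hQdef]
    simp only [pow_two, Finset.sum_mul_sum, hF]
  have hQint : Integrable Q π := by
    refine (integrable_finset_sum _ fun j _ => integrable_finset_sum _ fun k _ => hFint j k).congr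
      (Filter.Eventually.of_forall fun z => (hQsum z).symm)
  have hFval : ∀ j k, j ≠ k → ∫ z, F j k z ∂π = 0 := by
    intro j k hjk
    have e : ∫ z, F j k z ∂π = (p n j * p n k) * ∫ z, Y (z j) * Y (z k) ∂π := by
      rw [← integral_const_mul]
      exact integral_congr_ae (Filter.Eventually.of_forall fun z => by simp only [hF]; ring)
    rw [e, eval_mul_integral μ Y Y hjk, hYc]
    ring
  have hFdiag : ∀ j, ∫ z, F j j z ∂π = (p n j * p n j) * ∫ t, Y t * Y t ∂μ := by
    intro j
    have e : ∫ z, F j j z ∂π = (p n j * p n j) * ∫ z, (fun t => Y t * Y t) (z j) ∂π := by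
      rw [← integral_const_mul]
      exact integral_congr_ae (Filter.Eventually.of_forall fun z => by simp only [hF]; ring)
    rw [e, marg_integral μ (fun t => Y t * Y t) j]
  have hQval : ∫ z, Q z ∂π ≤ ε' * (M*M) := by
    have h1 : ∫ z, Q z ∂π = ∑ j, ∑ k, ∫ z, F j k z ∂π := by
      calc ∫ z, Q z ∂π = ∫ z, ∑ j, ∑ k, F j k z ∂π :=
            integral_congr_ae (Filter.Eventually.of_forall fun z => hQsum z)
        _ = ∑ j, ∫ z, ∑ k, F j k z ∂π :=
            integral_finset_sum _ fun j _ => integrable_finset_sum _ fun k _ => hFint j k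
        _ = ∑ j, ∑ k, ∫ z, F j k z ∂π :=
            Finset.sum_congr rfl fun j _ => integral_finset_sum _ fun k _ => hFint j k
    rw [h1]
    calc ∑ j, ∑ k, ∫ z, F j k z ∂π = ∑ j, (p n j * p n j) * ∫ t, Y t * Y t ∂μ := by
          refine Finset.sum_congr rfl fun j _ => ?_
          rw [Finset.sum_eq_single j (fun k _ hkj => hFval j k (Ne.symm hkj)) (by simp), hFdiag j]
      _ ≤ ∑ j, (ε' * p n j) * (M*M) := by
          refine Finset.sum_le_sum fun j _ => ?_
          have h2 : p n j * p n j ≤ ε' * p n j :=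
            mul_le_mul_of_nonneg_right (hpn j) (hp0 n j)
          exact mul_le_mul h2 hY2_le hY2_nonneg (mul_nonneg hε'.le (hp0 n j))
      _ = ε' * (M*M) := by
          rw [← Finset.sum_mul, ← Finset.mul_sum, hp1 n, mul_one]
  have hQnonneg : 0 ≤ ∫ z, Q z ∂π := integral_nonneg fun z => sq_nonneg _
  have hS1int : Integrable (fun z : Fin (N n) → ℝ => ∑ j, p n j * |w (z j)|) π :=
    integrable_finset_sum _ fun j _ => (marg_integrable μ hw_int.abs j).const_mul _
  have hS1val : ∫ z, ∑ j, p n j * |w (z j)| ∂π = ∫ t, |w t| ∂μ := by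
    rw [integral_finset_sum _ fun j _ => (marg_integrable μ hw_int.abs j).const_mul _]
    calc ∑ j, ∫ z, p n j * |w (z j)| ∂π = ∑ j, p n j * ∫ t, |w t| ∂μ := by
          refine Finset.sum_congr rfl fun j _ => ?_
          rw [integral_const_mul, marg_integral μ (fun t => |w t|) j]
      _ = ∫ t, |w t| ∂μ := by rw [← Finset.sum_mul, hp1 n, one_mul]
  have key : ∀ z : Fin (N n) → ℝ, |∑ j, p n j * h (z j) - a| ≤
      ((∑ j, p n j * |w (z j)|) + |d|) + (δ/2 + (1/(2*δ)) * Q z) := by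
    intro z
    have hsw : ∑ j, p n j * w (z j) = (∑ j, p n j * h (z j)) - ∑ j, p n j * b K (z j) := by
      simp only [hwdef, mul_sub, Finset.sum_sub_distrib]
    have hsY : ∑ j, p n j * Y (z j) = (∑ j, p n j * b K (z j)) - c := by
      simp only [hY, mul_sub, Finset.sum_sub_distrib, ← Finset.sum_mul, hp1 n, one_mul]
    have e1 : ∑ j, p n j * h (z j) - a =
        ((∑ j, p n j * w (z j)) - d) + ∑ j, p n j * Y (z j) := by
      rw [hsw, hsY, hddef]; ring
    have e2 : |∑ j, p n j * w (z j)| ≤ ∑ j, p n j * |w (z j)| := by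
      refine le_trans (Finset.abs_sum_le_sum_abs _ _) (Finset.sum_le_sum fun j _ => ?_)
      rw [abs_mul, abs_of_nonneg (hp0 n j)]
    have e3 : |∑ j, p n j * Y (z j)| ≤ δ/2 + (1/(2*δ)) * Q z := by
      have hq : Q z = |∑ j, p n j * Y (z j)|^2 := by rw [hQdef, sq_abs]
      rw [hq]
      have h2δ : (0:ℝ) < 2*δ := by linarith
      have key2 : 2*δ*|∑ j, p n j * Y (z j)| ≤
          2*δ*(δ/2 + 1/(2*δ)*|∑ j, p n j * Y (z j)|^2) := by
        have e : 2*δ*(δ/2 + 1/(2*δ)*|∑ j, p n j * Y (z j)|^2)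
            = δ*δ + |∑ j, p n j * Y (z j)|^2 := by
          field_simp
        rw [e]
        nlinarith [sq_nonneg (|∑ j, p n j * Y (z j)| - δ)]
      exact (mul_le_mul_iff_right₀ h2δ).1 key2
    calc |∑ j, p n j * h (z j) - a|
        = |((∑ j, p n j * w (z j)) - d) + ∑ j, p n j * Y (z j)| := by rw [e1]
      _ ≤ |(∑ j, p n j * w (z j)) - d| + |∑ j, p n j * Y (z j)| := abs_add_le _ _
      _ ≤ (|∑ j, p n j * w (z j)| + |d|) + (δ/2 + (1/(2*δ)) * Q z) :=
          add_le_add (abs_sub _ _) e3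
      _ ≤ ((∑ j, p n j * |w (z j)|) + |d|) + (δ/2 + (1/(2*δ)) * Q z) :=
          add_le_add (add_le_add_left e2 _) le_rfl
  have hGint1 : Integrable (fun z : Fin (N n) → ℝ => (∑ j, p n j * |w (z j)|) + |d|) π :=
    hS1int.add (integrable_const _)
  have hGint2 : Integrable (fun z : Fin (N n) → ℝ => δ/2 + (1/(2*δ)) * Q z) π :=
    (integrable_const _).add (hQint.const_mul _)
  have hmono : ∫ z, |∑ j, p n j * h (z j) - a| ∂π ≤
      ∫ z, (((∑ j, p n j * |w (z j)|) + |d|) + (δ/2 + (1/(2*δ)) * Q z)) ∂π :=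
    integral_mono_of_nonneg (Filter.Eventually.of_forall fun z => abs_nonneg _)
      (hGint1.add hGint2) (Filter.Eventually.of_forall key)
  have hval : ∫ z, (((∑ j, p n j * |w (z j)|) + |d|) + (δ/2 + (1/(2*δ)) * Q z)) ∂π
      = ((∫ t, |w t| ∂μ) + |d|) + (δ/2 + (1/(2*δ)) * ∫ z, Q z ∂π) := by
    rw [integral_add hGint1 hGint2, integral_add hS1int (integrable_const _),
      integral_add (integrable_const _) (hQint.const_mul _), integral_const_mul, hS1val]
    simp
  have h8 : (1/(2*δ)) * ∫ z, Q z ∂π ≤ ε/8 := by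
    have hεne : ε ≠ 0 := ne_of_gt hε
    have hMne : M*M+1 ≠ 0 := by positivity
    have hfrac : (M*M)/(M*M+1) ≤ 1 := by
      rw [div_le_one (by positivity)]; linarith
    calc (1/(2*δ)) * ∫ z, Q z ∂π ≤ (1/(2*δ)) * (ε' * (M*M)) := by
          refine mul_le_mul_of_nonneg_left hQval (by positivity)
      _ = (ε/8) * ((M*M)/(M*M+1)) := by rw [hδ, hε'def]; field_simp; ring
      _ ≤ (ε/8) * 1 := mul_le_mul_of_nonneg_left hfrac (by positivity)
      _ = ε/8 := mul_one _
  have hLnonneg : 0 ≤ ∫ z, |∑ j, p n j * h (z j) - a| ∂π :=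
    integral_nonneg fun z => abs_nonneg _
  rw [Real.dist_eq, sub_zero, abs_of_nonneg hLnonneg]
  have hwle : ∫ t, |w t| ∂μ < ε/8 := hKsmall
  calc ∫ z, |∑ j, p n j * h (z j) - a| ∂π
      ≤ ((∫ t, |w t| ∂μ) + |d|) + (δ/2 + (1/(2*δ)) * ∫ z, Q z ∂π) := hval ▸ hmono
    _ < ε := by rw [hδ]; linarith

/-- Size-biased sampling with arbitrary extra weights: if `ν₀` is a Borel
probability measure on `(0,∞)` with finite expectation `m`, `ν` its size-biased version
(`ν(A) = (1/m) ∫_A t dν₀`), and `(p^n)` a proper sequence of probability vectors, then the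
law `η_n` of the size-biased random choice from i.i.d. `Z_1, …, Z_{N_n} ∼ ν₀` with extra
weights `p^n` converges weakly to `ν`: for every bounded continuous `g` on `(0,∞)`,
`∫ g dη_n = E[(∑_j p^n_j Z_j g(Z_j)) / (∑_j p^n_j Z_j)] → ∫ g dν = (1/m) ∫ t g(t) dν₀`. -/
theorem size_biased_sampling_weak_convergence
    (ν₀ : Measure ℝ) [IsProbabilityMeasure ν₀] (hsupp : ν₀ (Set.Ioi 0)ᶜ = 0)
    (m : ℝ) (hint : Integrable (fun t : ℝ => t) ν₀) (hm : ∫ t, t ∂ν₀ = m)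
    (N : ℕ → ℕ) (p : ∀ n : ℕ, Fin (N n) → ℝ)
    (hp0 : ∀ n j, 0 ≤ p n j) (hp1 : ∀ n, ∑ j, p n j = 1)
    (hpmax : ∀ ε > 0, ∀ᶠ n in atTop, ∀ j, p n j ≤ ε)
    (g : ℝ → ℝ) (hgc : ContinuousOn g (Set.Ioi 0)) (hgb : ∃ C, ∀ t ∈ Set.Ioi (0:ℝ), |g t| ≤ C) :
    Tendsto
      (fun n => ∫ z,
          (∑ j, p n j * z j * g (z j)) / (∑ j, p n j * z j)
            ∂(Measure.pi fun _ : Fin (N n) => ν₀))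
      atTop (nhds ((1 / m) * ∫ t, t * g t ∂ν₀)) := by
  classical
  obtain ⟨C, hC⟩ := hgb
  have hC0 : 0 ≤ C := le_trans (abs_nonneg _) (hC 1 (Set.mem_Ioi.mpr one_pos))
  have hae : ∀ᵐ t ∂ν₀, t ∈ Set.Ioi (0:ℝ) := by
    rw [ae_iff]
    exact hsupp
  have hfm : AEStronglyMeasurable (fun t : ℝ => t * g t) ν₀ := by
    have h1 : AEMeasurable (fun t : ℝ => t * g t) (ν₀.restrict (Set.Ioi 0)) :=
      (continuousOn_id.mul hgc).aemeasurable measurableSet_Ioi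
    rw [Measure.restrict_eq_self_of_ae_mem hae] at h1
    exact h1.aestronglyMeasurable
  have hf_int : Integrable (fun t : ℝ => t * g t) ν₀ := by
    refine Integrable.mono' (hint.norm.const_mul C) hfm ?_
    filter_upwards [hae] with t ht
    rw [Real.norm_eq_abs]
    calc |t * g t| = |t| * |g t| := abs_mul _ _
      _ ≤ |t| * C := mul_le_mul_of_nonneg_left (hC t ht) (abs_nonneg t)
      _ = C * ‖t‖ := by rw [Real.norm_eq_abs]; ring
  have hm0 : 0 < m := by
    rw [← hm]
    rw [integral_pos_iff_support_of_nonneg_ae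
      (by filter_upwards [hae] with t ht; exact le_of_lt ht) hint]
    have h1 : ν₀ (Set.Ioi 0) = 1 := by
      have h2 := measure_add_measure_compl (μ := ν₀) (measurableSet_Ioi (a := (0:ℝ)))
      rw [hsupp, add_zero, measure_univ] at h2
      exact h2
    have h3 : Set.Ioi (0:ℝ) ⊆ Function.support (fun t : ℝ => t) := fun t ht => ne_of_gt ht
    have h4 := measure_mono (μ := ν₀) h3
    rw [h1] at h4
    exact lt_of_lt_of_le (by norm_num) h4
  have hT : Tendsto (fun n => ∫ z, |(∑ j, p n j * (z j * g (z j))) - ∫ t, t * g t ∂ν₀|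
      ∂(Measure.pi fun _ : Fin (N n) => ν₀)) atTop (nhds 0) :=
    wlln ν₀ N p hp0 hp1 hpmax (fun t => t * g t) hf_int
  have hS : Tendsto (fun n => ∫ z, |(∑ j, p n j * z j) - m|
      ∂(Measure.pi fun _ : Fin (N n) => ν₀)) atTop (nhds 0) := by
    have h1 := wlln ν₀ N p hp0 hp1 hpmax (fun t => t) hint
    simp only [hm] at h1
    exact h1
  set A : ℝ := ∫ t, t * g t ∂ν₀ with hA
  set c₁ : ℝ := 2/m with hc₁
  set c₂ : ℝ := 2*|A| /m^2 + (C + |A| /m)*(2/m) with hc₂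
  have hbound : ∀ n, |(∫ z, (∑ j, p n j * z j * g (z j)) / (∑ j, p n j * z j)
        ∂(Measure.pi fun _ : Fin (N n) => ν₀)) - (1/m)*A| ≤
      c₁ * (∫ z, |(∑ j, p n j * (z j * g (z j))) - A| ∂(Measure.pi fun _ : Fin (N n) => ν₀))
      + c₂ * (∫ z, |(∑ j, p n j * z j) - m| ∂(Measure.pi fun _ : Fin (N n) => ν₀)) := by
    intro n
    set π : Measure (Fin (N n) → ℝ) := Measure.pi fun _ => ν₀ with hπ
    haveI : IsProbabilityMeasure π := by rw [hπ]; infer_instance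
    obtain ⟨j₀, _, hj₀⟩ : ∃ j ∈ Finset.univ, p n j ≠ 0 :=
      Finset.exists_ne_zero_of_sum_ne_zero (by rw [hp1 n]; exact one_ne_zero)
    have hj₀pos : 0 < p n j₀ := lt_of_le_of_ne (hp0 n j₀) (Ne.symm hj₀)
    have hpos : ∀ᵐ z ∂π, ∀ j, 0 < z j := by
      rw [ae_all_iff]
      intro j
      rw [ae_iff]
      have h0 : π (Function.eval j ⁻¹' (Set.Ioi 0)ᶜ) = 0 := by
        rw [hπ]; exact Measure.pi_eval_preimage_null _ hsupp
      exact h0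
    have hTj : ∀ j : Fin (N n), Integrable (fun z : Fin (N n) → ℝ =>
        p n j * (z j * g (z j))) π := fun j =>
      (marg_integrable ν₀ hf_int j).const_mul _
    have hTint : Integrable (fun z : Fin (N n) → ℝ => ∑ j, p n j * z j * g (z j)) π := by
      refine (integrable_finset_sum Finset.univ fun j (_ : j ∈ Finset.univ) => hTj j).congr
        (Filter.Eventually.of_forall fun z => ?_)
      exact Finset.sum_congr rfl fun j _ => by ring
    have hSint : Integrable (fun z : Fin (N n) → ℝ => ∑ j, p n j * z j) π :=
      integrable_finset_sum _ fun j _ => (marg_integrable ν₀ hint j).const_mul _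
    have hRaesm : AEStronglyMeasurable (fun z : Fin (N n) → ℝ =>
        (∑ j, p n j * z j * g (z j)) / (∑ j, p n j * z j)) π :=
      (hTint.1.aemeasurable.div hSint.1.aemeasurable).aestronglyMeasurable
    have hTS : ∀ᵐ z ∂π, |∑ j, p n j * z j * g (z j)| ≤ C * (∑ j, p n j * z j) := by
      filter_upwards [hpos] with z hz
      calc |∑ j, p n j * z j * g (z j)| ≤ ∑ j, |p n j * z j * g (z j)| :=
            Finset.abs_sum_le_sum_abs _ _
        _ ≤ ∑ j, p n j * z j * C := by
            refine Finset.sum_le_sum fun j _ => ?_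
            rw [abs_mul, abs_mul, abs_of_nonneg (hp0 n j), abs_of_pos (hz j)]
            exact mul_le_mul_of_nonneg_left (hC (z j) (hz j))
              (mul_nonneg (hp0 n j) (hz j).le)
        _ = C * (∑ j, p n j * z j) := by rw [← Finset.sum_mul]; ring
    have hSpos : ∀ᵐ z ∂π, 0 < ∑ j, p n j * z j := by
      filter_upwards [hpos] with z hz
      exact Finset.sum_pos' (fun j _ => mul_nonneg (hp0 n j) (hz j).le)
        ⟨j₀, Finset.mem_univ _, mul_pos hj₀pos (hz j₀)⟩
    have hRb : ∀ᵐ z ∂π, ‖(∑ j, p n j * z j * g (z j)) / (∑ j, p n j * z j)‖ ≤ C := by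
      filter_upwards [hTS, hSpos] with z h1 h2
      rw [Real.norm_eq_abs, abs_div, abs_of_pos h2, div_le_iff₀ h2]
      exact h1
    have hRint : Integrable (fun z : Fin (N n) → ℝ =>
        (∑ j, p n j * z j * g (z j)) / (∑ j, p n j * z j)) π :=
      Integrable.mono' (integrable_const C) hRaesm hRb
    have hkey : ∀ᵐ z ∂π, |(∑ j, p n j * z j * g (z j)) / (∑ j, p n j * z j) - (1/m)*A| ≤
        (2/m)*|(∑ j, p n j * (z j * g (z j))) - A|
        + (2*|A| /m^2)*|(∑ j, p n j * z j) - m|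
        + ((C + |A| /m)*(2/m))*|(∑ j, p n j * z j) - m| := by
      filter_upwards [hTS, hSpos] with z h1 h2
      have e : (∑ j, p n j * (z j * g (z j))) = ∑ j, p n j * z j * g (z j) :=
        Finset.sum_congr rfl fun j _ => by ring
      rw [e]
      exact ratio_est (∑ j, p n j * z j * g (z j)) (∑ j, p n j * z j) A m C hm0 h2 h1
    have hMint1 : Integrable (fun z : Fin (N n) → ℝ =>
        |(∑ j, p n j * (z j * g (z j))) - A|) π :=
      ((integrable_finset_sum _ fun j _ => hTj j).sub (integrable_const A)).abs
    have hMint2 : Integrable (fun z : Fin (N n) → ℝ => |(∑ j, p n j * z j) - m|) π :=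
      (hSint.sub (integrable_const m)).abs
    have hmono : ∫ z, |(∑ j, p n j * z j * g (z j)) / (∑ j, p n j * z j) - (1/m)*A| ∂π ≤
        ∫ z, ((2/m)*|(∑ j, p n j * (z j * g (z j))) - A|
          + (2*|A| /m^2)*|(∑ j, p n j * z j) - m|
          + ((C + |A| /m)*(2/m))*|(∑ j, p n j * z j) - m|) ∂π :=
      integral_mono_of_nonneg (Filter.Eventually.of_forall fun z => abs_nonneg _)
        (((hMint1.const_mul _).add (hMint2.const_mul _)).add (hMint2.const_mul _)) hkey
    have hsplit : ∫ z, ((2/m)*|(∑ j, p n j * (z j * g (z j))) - A|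
          + (2*|A| /m^2)*|(∑ j, p n j * z j) - m|
          + ((C + |A| /m)*(2/m))*|(∑ j, p n j * z j) - m|) ∂π
        = (2/m) * (∫ z, |(∑ j, p n j * (z j * g (z j))) - A| ∂π)
          + (2*|A| /m^2) * (∫ z, |(∑ j, p n j * z j) - m| ∂π)
          + ((C + |A| /m)*(2/m)) * (∫ z, |(∑ j, p n j * z j) - m| ∂π) := by
      have h12 : Integrable (fun z : Fin (N n) → ℝ =>
          (2/m)*|(∑ j, p n j * (z j * g (z j))) - A|
          + (2*|A| /m^2)*|(∑ j, p n j * z j) - m|) π :=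
        (hMint1.const_mul _).add (hMint2.const_mul _)
      have h3 : Integrable (fun z : Fin (N n) → ℝ =>
          ((C + |A| /m)*(2/m))*|(∑ j, p n j * z j) - m|) π := hMint2.const_mul _
      rw [integral_add h12 h3, integral_add (hMint1.const_mul _) (hMint2.const_mul _),
        integral_const_mul, integral_const_mul, integral_const_mul]
    have habs : |(∫ z, (∑ j, p n j * z j * g (z j)) / (∑ j, p n j * z j) ∂π) - (1/m)*A|
        ≤ ∫ z, |(∑ j, p n j * z j * g (z j)) / (∑ j, p n j * z j) - (1/m)*A| ∂π := by
      have e : (∫ z, (∑ j, p n j * z j * g (z j)) / (∑ j, p n j * z j) ∂π) - (1/m)*A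
          = ∫ z, ((∑ j, p n j * z j * g (z j)) / (∑ j, p n j * z j) - (1/m)*A) ∂π := by
        rw [integral_sub hRint (integrable_const _), integral_const]
        simp
      rw [e]
      simpa [Real.norm_eq_abs] using norm_integral_le_integral_norm (μ := π)
        (fun z : Fin (N n) → ℝ =>
          (∑ j, p n j * z j * g (z j)) / (∑ j, p n j * z j) - (1/m)*A)
    calc |(∫ z, (∑ j, p n j * z j * g (z j)) / (∑ j, p n j * z j) ∂π) - (1/m)*A|
        ≤ ∫ z, |(∑ j, p n j * z j * g (z j)) / (∑ j, p n j * z j) - (1/m)*A| ∂π := habs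
      _ ≤ (2/m) * (∫ z, |(∑ j, p n j * (z j * g (z j))) - A| ∂π)
          + (2*|A| /m^2) * (∫ z, |(∑ j, p n j * z j) - m| ∂π)
          + ((C + |A| /m)*(2/m)) * (∫ z, |(∑ j, p n j * z j) - m| ∂π) :=
          hmono.trans_eq hsplit
      _ = c₁ * (∫ z, |(∑ j, p n j * (z j * g (z j))) - A| ∂π)
          + c₂ * (∫ z, |(∑ j, p n j * z j) - m| ∂π) := by
          rw [hc₁, hc₂]; ring
  have hB : Tendsto (fun n =>
      c₁ * (∫ z, |(∑ j, p n j * (z j * g (z j))) - A| ∂(Measure.pi fun _ : Fin (N n) => ν₀))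
      + c₂ * (∫ z, |(∑ j, p n j * z j) - m| ∂(Measure.pi fun _ : Fin (N n) => ν₀)))
      atTop (nhds 0) := by
    have h1 := (hT.const_mul c₁).add (hS.const_mul c₂)
    simpa using h1
  have hlim : Tendsto (fun n => (∫ z, (∑ j, p n j * z j * g (z j)) / (∑ j, p n j * z j)
      ∂(Measure.pi fun _ : Fin (N n) => ν₀)) - (1/m)*A) atTop (nhds 0) :=
    squeeze_zero_norm (fun n => hbound n) hB
  have hfinal := hlim.add (tendsto_const_nhds (x := (1/m)*A))
  simpa using hfinal
end

section
/- Let σ be an exponential random variable with rate r > 0, let λ > 0, and let Y be a random variable independent of σ with P(Y > 0) = 1. Then the law of the product e^{−λσ} Y is absolutely continuous with respect to Lebesgue measure on ℝ. -/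
open MeasureTheory ProbabilityTheory Filter Real Set

/-- If `σ` is exponential with rate `r > 0`, `λ > 0`, and `Y` is a
random variable independent of `σ` with `P(Y > 0) = 1`, then the law of the product
`exp (−λσ) · Y` is absolutely continuous with respect to Lebesgue measure on `ℝ`. -/
theorem exp_neg_lambda_mul_indep_absolutely_continuous
    {Ω : Type*} [MeasurableSpace Ω] (P : Measure Ω) [IsProbabilityMeasure P]
    (r : ℝ) (hr : 0 < r) (lam : ℝ) (hlam : 0 < lam)
    (σ : Ω → ℝ) (hσmeas : Measurable σ) (hσdist : P.map σ = expMeasure r)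
    (Y : Ω → ℝ) (hYmeas : Measurable Y) (hYpos : ∀ᵐ ω ∂P, 0 < Y ω)
    (hindep : IndepFun σ Y P) :
    P.map (fun ω => Real.exp (-lam * σ ω) * Y ω) ≪ volume := by
  have hfmeas : Measurable (fun ω => Real.exp (-lam * σ ω) * Y ω) :=
    ((hσmeas.const_mul (-lam)).exp).mul hYmeas
  refine Measure.AbsolutelyContinuous.mk (fun s hs hs0 => ?_)
  rw [Measure.map_apply hfmeas hs]
  -- rewrite via the joint law
  have hT : MeasurableSet {p : ℝ × ℝ | Real.exp (-lam * p.1) * p.2 ∈ s} :=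
    (((measurable_fst.const_mul (-lam)).exp).mul measurable_snd) hs
  have hprod : P.map (fun ω => (σ ω, Y ω)) = (P.map σ).prod (P.map Y) :=
    (indepFun_iff_map_prod_eq_prod_map_map hσmeas.aemeasurable hYmeas.aemeasurable).mp hindep
  have hpre : (fun ω => Real.exp (-lam * σ ω) * Y ω) ⁻¹' s
      = (fun ω => (σ ω, Y ω)) ⁻¹' {p : ℝ × ℝ | Real.exp (-lam * p.1) * p.2 ∈ s} := rfl
  rw [hpre, ← Measure.map_apply (hσmeas.prodMk hYmeas) hT, hprod,
    Measure.prod_apply_symm hT]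
  -- the law of σ is absolutely continuous
  have hσac : P.map σ ≪ volume := by
    rw [hσdist]
    exact withDensity_absolutelyContinuous _ _
  -- a.e. y under the law of Y is positive
  have hνpos : ∀ᵐ y ∂(P.map Y), 0 < y := by
    rw [ae_map_iff hYmeas.aemeasurable measurableSet_Ioi]
    exact hYpos
  rw [lintegral_congr_ae (g := fun _ => 0) ?_, lintegral_zero]
  filter_upwards [hνpos] with y hy
  -- for a fixed y > 0, the slice is null
  apply hσac
  -- the slice is contained in the image of a null set under a differentiable map
  have hsub : ((fun x => (x, y)) ⁻¹' {p : ℝ × ℝ | Real.exp (-lam * p.1) * p.2 ∈ s})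
      ⊆ (fun u => Real.log (u / y) / (-lam)) '' (s ∩ Ioi 0) := by
    intro x hx
    refine ⟨Real.exp (-lam * x) * y, ⟨hx, mul_pos (Real.exp_pos _) hy⟩, ?_⟩
    simp only [mul_div_assoc, div_self hy.ne', mul_one, Real.log_exp]
    field_simp
  refine measure_mono_null hsub ?_
  have hdiff : DifferentiableOn ℝ (fun u => Real.log (u / y) / (-lam)) (s ∩ Ioi 0) := by
    intro u hu
    have hu0 : u ≠ 0 := ne_of_gt hu.2
    exact (((Real.differentiableAt_log (by positivity)).comp u
      ((differentiable_id.div_const y) u)).div_const (-lam)).differentiableWithinAt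
  have hnull : volume (s ∩ Ioi 0) = 0 :=
    measure_mono_null inter_subset_left hs0
  simpa using
    MeasureTheory.addHaar_image_eq_zero_of_differentiableOn_of_addHaar_eq_zero
      (μ := volume) hdiff hnull
end
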